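/- arXiv:2103.11499 — 10 statements merged into one kernel-verified Lean document; each statement's English description precedes it below -/
import Mathlib

section
/- For every positive integer L, the set of pairs (X, Y) of real symmetric L×L matrices such that X is positive semidefinite and both X + Y and X − Y are positive semidefinite is equal to the closure (in the Euclidean topology on pairs of L×L real matrices) of the set of pairs (X, Y) of real symmetric L×L matrices such that X is positive definite and X − Y X⁻¹ Y is positive definite. -/
set_option linter.unusedSectionVars false

open Matrix

section Helpers

variable {n : Type*} [Fintype n] [DecidableEq n]

private lemma isHermitian_of_isSymm' {M : Matrix n n ℝ} (h : M.IsSymm) : M.IsHermitian := by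
  rwa [Matrix.IsHermitian, conjTranspose_eq_transpose_of_trivial]

private lemma quad_conj' (A B : Matrix n n ℝ) (x : n → ℝ) :
    star x ⬝ᵥ ((Bᴴ * A * B) *ᵥ x) = star (B *ᵥ x) ⬝ᵥ (A *ᵥ (B *ᵥ x)) := by
  simp only [star_mulVec, dotProduct_mulVec, vecMul_vecMul]

private lemma posDef_smul_one' {ε : ℝ} (hε : 0 < ε) : (ε • (1 : Matrix n n ℝ)).PosDef := by
  refine .of_dotProduct_mulVec_pos (by simp [Matrix.IsHermitian]) fun x hx => ?_
  have h1 : (ε • (1 : Matrix n n ℝ)) *ᵥ x = ε • x := by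
    simp [smul_mulVec]
  rw [h1, dotProduct_smul]
  exact smul_pos hε (Matrix.dotProduct_star_self_pos_iff.mpr hx)

/-- Forward Schur direction. -/
private lemma schur_imp' {X Y : Matrix n n ℝ} (hX : X.PosDef) (hY : Y.IsHermitian)
    (hS : (X - Y * X⁻¹ * Y).PosDef) : (X + Y).PosDef ∧ (X - Y).PosDef := by
  have hd : IsUnit X.det := (Matrix.isUnit_iff_isUnit_det X).mp hX.isUnit
  have hinv : X⁻¹ * X = 1 := Matrix.nonsing_inv_mul X hd
  have hXH : Xᴴ = X := hX.isHermitian.eq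
  have hYH : Yᴴ = Y := hY.eq
  have hWH : X⁻¹ᴴ = X⁻¹ := hX.isHermitian.inv.eq
  have key1 : (1 + X⁻¹ * Y)ᴴ * X * (1 + X⁻¹ * Y) + (X - Y * X⁻¹ * Y)
      = (X + Y) + (X + Y) := by
    simp only [conjTranspose_add, conjTranspose_mul, conjTranspose_one, hYH, hWH, hXH]
    simp only [Matrix.mul_add, Matrix.add_mul, Matrix.mul_one, Matrix.one_mul,
      Matrix.mul_assoc, Matrix.mul_nonsing_inv_cancel_left _ _ hd,
      Matrix.nonsing_inv_mul_cancel_left _ _ hd, hinv]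
    abel
  have key2 : (1 - X⁻¹ * Y)ᴴ * X * (1 - X⁻¹ * Y) + (X - Y * X⁻¹ * Y)
      = (X - Y) + (X - Y) := by
    simp only [conjTranspose_sub, conjTranspose_mul, conjTranspose_one, hYH, hWH, hXH]
    simp only [Matrix.mul_sub, Matrix.sub_mul, Matrix.mul_one, Matrix.one_mul,
      Matrix.mul_assoc, Matrix.mul_nonsing_inv_cancel_left _ _ hd,
      Matrix.nonsing_inv_mul_cancel_left _ _ hd, hinv]
    abel
  have hp2 : ((X + Y) + (X + Y)).PosDef := by
    rw [← key1]
    exact Matrix.PosDef.posSemidef_add (hX.posSemidef.conjTranspose_mul_mul_same _) hS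
  have hm2 : ((X - Y) + (X - Y)).PosDef := by
    rw [← key2]
    exact Matrix.PosDef.posSemidef_add (hX.posSemidef.conjTranspose_mul_mul_same _) hS
  constructor
  · refine .of_dotProduct_mulVec_pos (hX.isHermitian.add hY) fun x hx => ?_
    have h := hp2.dotProduct_mulVec_pos hx
    rw [add_mulVec, dotProduct_add] at h
    linarith
  · refine .of_dotProduct_mulVec_pos (hX.isHermitian.sub hY) fun x hx => ?_
    have h := hm2.dotProduct_mulVec_pos hx
    rw [add_mulVec, dotProduct_add] at h
    linarith

/-- Reverse Schur direction. -/
private lemma schur_rev' {X Y : Matrix n n ℝ} (hX : X.PosDef) (hY : Y.IsHermitian)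
    (hp : (X + Y).PosDef) (hm : (X - Y).PosDef) : (X - Y * X⁻¹ * Y).PosDef := by
  have hd : IsUnit X.det := (Matrix.isUnit_iff_isUnit_det X).mp hX.isUnit
  have hXH : Xᴴ = X := hX.isHermitian.eq
  have hYH : Yᴴ = Y := hY.eq
  have hWH : X⁻¹ᴴ = X⁻¹ := hX.isHermitian.inv.eq
  have hSherm : (X - Y * X⁻¹ * Y).IsHermitian := by
    simp only [Matrix.IsHermitian, conjTranspose_sub, conjTranspose_mul, hYH, hWH, hXH,
      Matrix.mul_assoc]
  have key3 : (1 - X⁻¹ * Y)ᴴ * (X + Y) * (1 - X⁻¹ * Y)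
      + (1 + X⁻¹ * Y)ᴴ * (X - Y) * (1 + X⁻¹ * Y)
      = (X - Y * X⁻¹ * Y) + (X - Y * X⁻¹ * Y) := by
    simp only [conjTranspose_sub, conjTranspose_add, conjTranspose_mul, conjTranspose_one,
      hYH, hWH, hXH]
    simp only [Matrix.mul_sub, Matrix.sub_mul, Matrix.mul_add, Matrix.add_mul,
      Matrix.mul_one, Matrix.one_mul, Matrix.mul_assoc,
      Matrix.mul_nonsing_inv_cancel_left _ _ hd, Matrix.nonsing_inv_mul_cancel_left _ _ hd]
    abel
  refine .of_dotProduct_mulVec_pos hSherm fun x hx => ?_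
  have hq : 0 < star x ⬝ᵥ (((X - Y * X⁻¹ * Y) + (X - Y * X⁻¹ * Y)) *ᵥ x) := by
    rw [← key3, add_mulVec, dotProduct_add, quad_conj', quad_conj']
    set u := (1 - X⁻¹ * Y) *ᵥ x with hu_def
    set v := (1 + X⁻¹ * Y) *ᵥ x with hv_def
    have huv : u + v = x + x := by
      rw [hu_def, hv_def, ← add_mulVec]
      have : (1 - X⁻¹ * Y) + (1 + X⁻¹ * Y) = (1 : Matrix n n ℝ) + 1 := by abel
      rw [this, add_mulVec, one_mulVec]
    by_cases hu : u = 0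
    · have hv : v ≠ 0 := by
        intro hv0
        rw [hu, hv0, add_zero] at huv
        refine hx (funext fun i => ?_)
        have h := congrFun huv i
        simp only [Pi.zero_apply, Pi.add_apply] at h ⊢
        linarith
      exact add_pos_of_nonneg_of_pos (hp.posSemidef.dotProduct_mulVec_nonneg u) (hm.dotProduct_mulVec_pos hv)
    · exact add_pos_of_pos_of_nonneg (hp.dotProduct_mulVec_pos hu) (hm.posSemidef.dotProduct_mulVec_nonneg v)
  rw [add_mulVec, dotProduct_add] at hq
  linarith

private lemma isClosed_posSemidef_comp' {α : Type*} [TopologicalSpace α]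
    {f : α → Matrix n n ℝ} (hf : Continuous f) : IsClosed {a | (f a).PosSemidef} := by
  have : {a | (f a).PosSemidef}
      = {a | (f a)ᴴ = f a} ∩ ⋂ x : n → ℝ, {a | 0 ≤ star x ⬝ᵥ ((f a) *ᵥ x)} := by
    ext a
    simp [posSemidef_iff_dotProduct_mulVec, Matrix.IsHermitian, Set.mem_iInter]
  rw [this]
  refine IsClosed.inter (isClosed_eq hf.matrix_conjTranspose hf) ?_
  refine isClosed_iInter fun x => ?_
  exact isClosed_le continuous_const (Continuous.dotProduct continuous_const
    (hf.matrix_mulVec continuous_const))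

private lemma isClosed_isSymm_comp' {α : Type*} [TopologicalSpace α]
    {f : α → Matrix n n ℝ} (hf : Continuous f) : IsClosed {a | (f a).IsSymm} := by
  have : {a | (f a).IsSymm} = {a | (f a)ᵀ = f a} := rfl
  rw [this]
  exact isClosed_eq hf.matrix_transpose hf

end Helpers

/-- The set of pairs (X, Y) of real symmetric L×L matrices with X, X + Y and X − Y
positive semidefinite equals the closure of the set of pairs of symmetric matrices with
X positive definite and X − Y X⁻¹ Y positive definite. -/
theorem stmt_0 (L : ℕ) (hL : 1 ≤ L) :
    {p : Matrix (Fin L) (Fin L) ℝ × Matrix (Fin L) (Fin L) ℝ |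
        p.1.IsSymm ∧ p.2.IsSymm ∧ p.1.PosSemidef ∧
        (p.1 + p.2).PosSemidef ∧ (p.1 - p.2).PosSemidef} =
    closure {p : Matrix (Fin L) (Fin L) ℝ × Matrix (Fin L) (Fin L) ℝ |
        p.1.IsSymm ∧ p.2.IsSymm ∧ p.1.PosDef ∧
        (p.1 - p.2 * p.1⁻¹ * p.2).PosDef} := by
  apply Set.Subset.antisymm
  · -- S ⊆ closure T
    rintro ⟨X, Y⟩ ⟨hXs, hYs, hX, hp, hm⟩
    have htend : Filter.Tendsto
        (fun ε : ℝ => ((X + ε • 1, Y) : Matrix (Fin L) (Fin L) ℝ × Matrix (Fin L) (Fin L) ℝ))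
        (nhdsWithin 0 (Set.Ioi 0)) (nhds (X, Y)) := by
      have hc : Continuous
          (fun ε : ℝ => ((X + ε • 1, Y) : Matrix (Fin L) (Fin L) ℝ × Matrix (Fin L) (Fin L) ℝ)) :=
        ((continuous_const.add (continuous_id.smul continuous_const)).prodMk continuous_const)
      have := hc.tendsto 0
      simp only [zero_smul, add_zero] at this
      exact this.mono_left nhdsWithin_le_nhds
    refine mem_closure_of_tendsto htend ?_
    filter_upwards [self_mem_nhdsWithin] with ε hε
    have hε' : (0 : ℝ) < ε := hε
    have hXE : (X + ε • 1).PosDef := Matrix.PosDef.posSemidef_add hX (posDef_smul_one' hε')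
    have hpe : ((X + ε • 1) + Y).PosDef := by
      have : (X + ε • 1) + Y = (X + Y) + ε • 1 := by abel
      rw [this]
      exact Matrix.PosDef.posSemidef_add hp (posDef_smul_one' hε')
    have hme : ((X + ε • 1) - Y).PosDef := by
      have : (X + ε • 1) - Y = (X - Y) + ε • 1 := by abel
      rw [this]
      exact Matrix.PosDef.posSemidef_add hm (posDef_smul_one' hε')
    have hXEs : (X + ε • 1).IsSymm := by
      rw [Matrix.IsSymm, transpose_add, transpose_smul, transpose_one, hXs.eq]
    exact ⟨hXEs, hYs,  hXE, schur_rev' hXE (isHermitian_of_isSymm' hYs) hpe hme⟩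
  · -- closure T ⊆ S
    refine closure_minimal ?_ ?_
    · rintro ⟨X, Y⟩ ⟨hXs, hYs, hX, hS⟩
      obtain ⟨h1, h2⟩ := schur_imp' hX (isHermitian_of_isSymm' hYs) hS
      exact ⟨hXs, hYs, hX.posSemidef, h1.posSemidef, h2.posSemidef⟩
    · refine IsClosed.inter (isClosed_isSymm_comp' continuous_fst) ?_
      refine IsClosed.inter (isClosed_isSymm_comp' continuous_snd) ?_
      refine IsClosed.inter (isClosed_posSemidef_comp' continuous_fst) ?_
      exact IsClosed.inter (isClosed_posSemidef_comp' (continuous_fst.add continuous_snd))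
        (isClosed_posSemidef_comp' (continuous_fst.sub continuous_snd))
end

section
/- Let X and Y be real symmetric L×L matrices. If X is positive definite and X − Y X⁻¹ Y is positive definite, then X + Y and X − Y are positive semidefinite. -/
open Matrix

lemma psd_of_double {n : ℕ} (A : Matrix (Fin n) (Fin n) ℝ) (hA : A.IsHermitian)
    (h : (A + A).PosSemidef) : A.PosSemidef := by
  refine ⟨hA, fun x => ?_⟩
  have h2 := h.2 x
  simp only [Matrix.add_apply, mul_add, add_mul, Finsupp.sum_add] at h2
  linarith

/-- If X is symmetric positive definite and X − Y X⁻¹ Y is positive definite (Y symmetric),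
then X + Y and X − Y are positive semidefinite. -/
theorem stmt_1 (L : ℕ) (X Y : Matrix (Fin L) (Fin L) ℝ)
    (hX : X.IsSymm) (hY : Y.IsSymm) (hXpd : X.PosDef)
    (h : (X - Y * X⁻¹ * Y).PosDef) :
    (X + Y).PosSemidef ∧ (X - Y).PosSemidef := by
  have hdet : IsUnit X.det := hXpd.det_pos.ne'.isUnit
  have h1 : X * X⁻¹ = 1 := Matrix.mul_nonsing_inv X hdet
  have h2 : X⁻¹ * X = 1 := Matrix.nonsing_inv_mul X hdet
  have hinv : X⁻¹.PosSemidef := hXpd.inv.posSemidef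
  have key : ∀ Z : Matrix (Fin L) (Fin L) ℝ, Z.IsHermitian →
      Z + Z = Zᴴ * X⁻¹ * Z + (X - Y * X⁻¹ * Y) → Z.PosSemidef := by
    intro Z hZ hid
    refine psd_of_double Z hZ ?_
    rw [hid]
    exact (hinv.conjTranspose_mul_mul_same Z).add h.posSemidef
  have hXh : X.IsHermitian := hX
  have hYh : Y.IsHermitian := hY
  constructor
  · refine key (X + Y) (hXh.add hYh) ?_
    rw [(hXh.add hYh).eq, add_mul X Y X⁻¹, h1, add_mul, one_mul, mul_add,
      mul_assoc Y X⁻¹ X, h2, mul_one]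
    abel
  · refine key (X - Y) (hXh.sub hYh) ?_
    rw [(hXh.sub hYh).eq, sub_mul X Y X⁻¹, h1, sub_mul, one_mul, mul_sub,
      mul_assoc Y X⁻¹ X, h2, mul_one]
    abel
end

section
/- Let X and Y be real symmetric L×L matrices. If X + Y and X − Y are both positive definite, then X is positive definite and X − Y X⁻¹ Y is positive semidefinite. -/
open Matrix

/-- If X + Y and X − Y are positive definite (X, Y symmetric), then X is positive definite
and X − Y X⁻¹ Y is positive semidefinite. -/
theorem stmt_2 (L : ℕ) (X Y : Matrix (Fin L) (Fin L) ℝ)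
    (hX : X.IsSymm) (hY : Y.IsSymm)
    (h1 : (X + Y).PosDef) (h2 : (X - Y).PosDef) :
    X.PosDef ∧ (X - Y * X⁻¹ * Y).PosSemidef := by
  have hXh : X.IsHermitian := by
    rwa [IsHermitian, conjTranspose_eq_transpose_of_trivial]
  have hYh : Y.IsHermitian := by
    rwa [IsHermitian, conjTranspose_eq_transpose_of_trivial]
  have key : ∀ (A : Matrix (Fin L) (Fin L) ℝ), A.IsSymm →
      ∀ u v : Fin L → ℝ, u ⬝ᵥ A *ᵥ v = v ⬝ᵥ A *ᵥ u := by
    intro A hA u v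
    rw [dotProduct_mulVec, ← mulVec_transpose, hA, dotProduct_comm]
  have hXpos : X.PosDef := by
    refine .of_dotProduct_mulVec_pos hXh fun x hx => ?_
    have h1' := h1.dotProduct_mulVec_pos hx
    have h2' := h2.dotProduct_mulVec_pos hx
    simp only [add_mulVec, sub_mulVec, dotProduct_add, dotProduct_sub, star_trivial,
      RCLike.ofReal_real_eq_id, id] at h1' h2' ⊢
    linarith
  haveI : Invertible X := hXpos.isUnit.invertible
  refine ⟨hXpos, ?_⟩
  have hblock : (fromBlocks X Y Yᴴ X).PosSemidef := by
    rw [hYh.eq]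
    refine .of_dotProduct_mulVec_nonneg (IsHermitian.fromBlocks hXh hYh.eq hXh) fun z => ?_
    set u : Fin L → ℝ := z ∘ Sum.inl with hu
    set v : Fin L → ℝ := z ∘ Sum.inr with hv
    have hz : z = Sum.elim u v := by ext i; cases i <;> rfl
    have hpq := h1.posSemidef.dotProduct_mulVec_nonneg (u + v)
    have hmq := h2.posSemidef.dotProduct_mulVec_nonneg (u - v)
    rw [hz]
    simp only [star_trivial, fromBlocks_mulVec, sumElim_dotProduct_sumElim,
      add_mulVec, sub_mulVec, mulVec_add, mulVec_sub, dotProduct_add, dotProduct_sub,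
      add_dotProduct, sub_dotProduct, Sum.elim_comp_inl, Sum.elim_comp_inr] at hpq hmq ⊢
    have k1 := key X hX u v
    have k2 := key Y hY u v
    linarith
  have hres := (PosDef.fromBlocks₁₁ Y X hXpos).mp hblock
  rwa [hYh.eq] at hres
end

section
/- Fix integers L ≥ 1 and m ≥ 2 and define G(X₁, …, Xₘ) = X₁ − Σ_{i=2}^{m} Xᵢ X₁⁻¹ Xᵢᵀ for tuples of real L×L matrices with X₁ symmetric positive definite. Then G is concave with respect to the Loewner order: for any two tuples (X₁, …, Xₘ) and (X₁', …, Xₘ') with X₁ and X₁' symmetric positive definite and any t ∈ [0, 1], the matrix G(t·X₁ + (1 − t)·X₁', …, t·Xₘ + (1 − t)·Xₘ') − t·G(X₁, …, Xₘ) − (1 − t)·G(X₁', …, Xₘ') is positive semidefinite. -/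
open Matrix

/-- G(X₁, …, Xₘ) = X₁ − Σ_{i=2}^m Xᵢ X₁⁻¹ Xᵢᵀ on tuples of real L×L matrices with X₁
symmetric positive definite. -/
noncomputable def Garrow (L m : ℕ) [NeZero m]
    (Z : Fin m → Matrix (Fin L) (Fin L) ℝ) : Matrix (Fin L) (Fin L) ℝ :=
  Z 0 - ∑ i ∈ Finset.univ.erase (0 : Fin m), Z i * (Z 0)⁻¹ * (Z i)ᵀ

section Aux

variable {L : ℕ}

lemma psd_smul {A : Matrix (Fin L) (Fin L) ℝ} (hA : A.PosSemidef) {c : ℝ} (hc : 0 ≤ c) :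
    (c • A).PosSemidef := by
  refine ⟨?_, fun x => ?_⟩
  · unfold Matrix.IsHermitian
    rw [conjTranspose_smul, hA.1]
    simp
  · exact (hA.smul hc).2 x

lemma pd_smul {A : Matrix (Fin L) (Fin L) ℝ} (hA : A.PosDef) {c : ℝ} (hc : 0 < c) :
    (c • A).PosDef := by
  refine ⟨?_, fun x hx => ?_⟩
  · unfold Matrix.IsHermitian
    rw [conjTranspose_smul, hA.1]
    simp
  · exact (hA.smul hc).2 hx

/-- Key lemma: for `Y` symmetric positive definite,
`P Y⁻¹ Pᵀ ⪰ P Rᵀ + R Pᵀ − R Y Rᵀ` for every `R`. -/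
lemma key_ineq {Y : Matrix (Fin L) (Fin L) ℝ} (hY : Y.PosDef)
    (P R : Matrix (Fin L) (Fin L) ℝ) :
    (P * Y⁻¹ * Pᵀ - (P * Rᵀ + R * Pᵀ - R * Y * Rᵀ)).PosSemidef := by
  have hdet : IsUnit Y.det := hY.det_pos.ne'.isUnit
  have hYs : Yᵀ = Y := by
    have := hY.isHermitian.eq
    simpa [conjTranspose_eq_transpose_of_trivial] using this
  have hYinv : Y⁻¹ᵀ = Y⁻¹ := by rw [transpose_nonsing_inv, hYs]
  have hmul : Y * Y⁻¹ = 1 := mul_nonsing_inv Y hdet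
  have hmul' : Y⁻¹ * Y = 1 := nonsing_inv_mul Y hdet
  have hEq : P * Y⁻¹ * Pᵀ - (P * Rᵀ + R * Pᵀ - R * Y * Rᵀ)
      = (P - R * Y) * Y⁻¹ * (P - R * Y)ᵀ := by
    rw [transpose_sub, transpose_mul, hYs]
    rw [sub_mul, sub_mul, mul_sub, mul_sub]
    have h1 : R * Y * Y⁻¹ = R := by rw [mul_assoc, hmul, mul_one]
    have h2 : P * Y⁻¹ * (Y * Rᵀ) = P * Rᵀ := by
      rw [mul_assoc, ← mul_assoc Y⁻¹, hmul', one_mul]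
    rw [h1, h2]
    have h3 : R * (Y * Rᵀ) = R * Y * Rᵀ := by rw [mul_assoc]
    rw [h3]
    abel
  rw [hEq]
  have hinv : (Y⁻¹).PosSemidef := (hY.inv).posSemidef
  have := hinv.mul_mul_conjTranspose_same (P - R * Y)
  simpa [conjTranspose_eq_transpose_of_trivial, Matrix.transpose_map] using this

end Aux

/-- G is concave with respect to the Loewner order on tuples whose first entry is
symmetric positive definite. -/
theorem stmt_6 (L m : ℕ) (hL : 1 ≤ L) [NeZero m] (hm : 2 ≤ m)
    (X X' : Fin m → Matrix (Fin L) (Fin L) ℝ)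
    (hX0 : (X 0).IsSymm) (hX0' : (X' 0).IsSymm)
    (hXpd : (X 0).PosDef) (hX'pd : (X' 0).PosDef)
    (t : ℝ) (ht0 : 0 ≤ t) (ht1 : t ≤ 1) :
    (Garrow L m (fun i => t • X i + (1 - t) • X' i)
      - t • Garrow L m X - (1 - t) • Garrow L m X').PosSemidef := by
  set A := X 0 with hA
  set B := X' 0 with hB
  set M : Matrix (Fin L) (Fin L) ℝ := t • A + (1 - t) • B with hM
  -- M is positive definite
  have hMpd : M.PosDef := by
    rcases eq_or_lt_of_le ht0 with h0 | h0
    · have : M = (1 - t) • B := by rw [hM, ← h0]; simp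
      rw [this]
      exact pd_smul hX'pd (by rw [← h0]; norm_num)
    · exact (pd_smul hXpd h0).add_posSemidef (psd_smul hX'pd.posSemidef (by linarith))
  have hdetM : IsUnit M.det := hMpd.det_pos.ne'.isUnit
  have hMs : Mᵀ = M := by
    have := hMpd.isHermitian.eq
    simpa [conjTranspose_eq_transpose_of_trivial] using this
  have hMinv : M⁻¹ᵀ = M⁻¹ := by rw [transpose_nonsing_inv, hMs]
  have hmulM : M * M⁻¹ = 1 := mul_nonsing_inv M hdetM
  have hmulM' : M⁻¹ * M = 1 := nonsing_inv_mul M hdetM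
  -- Rewrite the difference as a sum of PSD matrices
  have hrw : Garrow L m (fun i => t • X i + (1 - t) • X' i)
      - t • Garrow L m X - (1 - t) • Garrow L m X'
      = ∑ i ∈ Finset.univ.erase (0 : Fin m),
          (t • (X i * A⁻¹ * (X i)ᵀ) + (1 - t) • (X' i * B⁻¹ * (X' i)ᵀ)
            - (t • X i + (1 - t) • X' i) * M⁻¹ * (t • X i + (1 - t) • X' i)ᵀ) := by
    unfold Garrow
    simp only [Finset.smul_sum, smul_sub, Finset.sum_sub_distrib]
    rw [Finset.sum_add_distrib]
    abel
  rw [hrw]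
  -- each summand is PSD
  have hsummand : ∀ i ∈ Finset.univ.erase (0 : Fin m),
      (t • (X i * A⁻¹ * (X i)ᵀ) + (1 - t) • (X' i * B⁻¹ * (X' i)ᵀ)
        - (t • X i + (1 - t) • X' i) * M⁻¹ * (t • X i + (1 - t) • X' i)ᵀ).PosSemidef := by
    intro i _
    set P := X i
    set Q := X' i
    set R : Matrix (Fin L) (Fin L) ℝ := (t • P + (1 - t) • Q) * M⁻¹ with hR
    have hcross : (t • P + (1 - t) • Q) * M⁻¹ * (t • P + (1 - t) • Q)ᵀ
        = t • (P * Rᵀ + R * Pᵀ - R * A * Rᵀ)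
          + (1 - t) • (Q * Rᵀ + R * Qᵀ - R * B * Rᵀ) := by
      have hRM : R * M = t • P + (1 - t) • Q := by
        rw [hR, mul_assoc, hmulM', mul_one]
      have hRt : (t • P + (1 - t) • Q) * Rᵀ
          = (t • P + (1 - t) • Q) * M⁻¹ * (t • P + (1 - t) • Q)ᵀ := by
        rw [hR, transpose_mul, hMinv, ← mul_assoc]
      have hRl : R * (t • P + (1 - t) • Q)ᵀ
          = (t • P + (1 - t) • Q) * M⁻¹ * (t • P + (1 - t) • Q)ᵀ := by
        rw [hR]
      have hRMR : R * M * Rᵀ = (t • P + (1 - t) • Q) * M⁻¹ * (t • P + (1 - t) • Q)ᵀ := by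
        rw [hRM, hRt]
      have expand : t • (P * Rᵀ + R * Pᵀ - R * A * Rᵀ)
          + (1 - t) • (Q * Rᵀ + R * Qᵀ - R * B * Rᵀ)
          = (t • P + (1 - t) • Q) * Rᵀ + R * (t • P + (1 - t) • Q)ᵀ - R * M * Rᵀ := by
        rw [hM]
        simp only [transpose_add, transpose_smul, add_mul, mul_add, smul_add, smul_sub,
          Matrix.smul_mul, Matrix.mul_smul]
        abel
      rw [expand, hRt, hRl, hRMR]
      abel
    rw [hcross]
    have h1 := key_ineq hXpd P R
    have h2 := key_ineq hX'pd Q R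
    have goalEq : t • (P * A⁻¹ * Pᵀ) + (1 - t) • (Q * B⁻¹ * Qᵀ)
        - (t • (P * Rᵀ + R * Pᵀ - R * A * Rᵀ) + (1 - t) • (Q * Rᵀ + R * Qᵀ - R * B * Rᵀ))
        = t • (P * A⁻¹ * Pᵀ - (P * Rᵀ + R * Pᵀ - R * A * Rᵀ))
          + (1 - t) • (Q * B⁻¹ * Qᵀ - (Q * Rᵀ + R * Qᵀ - R * B * Rᵀ)) := by
      simp only [smul_sub]; abel
    rw [goalEq]
    exact (psd_smul h1 ht0).add (psd_smul h2 (by linarith))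
  -- sum of PSD is PSD
  refine Finset.sum_induction _ _ (fun a b ha hb => ha.add hb) Matrix.PosSemidef.zero hsummand
end

section
/- Fix integers L ≥ 1 and m ≥ 2. For a real symmetric L×L matrix A and real symmetric L×L matrices B₂, …, Bₘ, let M(A, B₂, …, Bₘ) be the mL×mL block matrix whose m diagonal L×L blocks all equal A, whose (1, j) and (j, 1) blocks equal Bⱼ for each j ∈ {2, …, m}, and whose remaining blocks are zero. Then the set of tuples (A, B₂, …, Bₘ) of real symmetric L×L matrices for which M(A, B₂, …, Bₘ) is positive semidefinite equals the closure (in the Euclidean topology on tuples of matrices) of the set of tuples for which A is positive definite and A − Σ_{j=2}^{m} Bⱼ A⁻¹ Bⱼ is positive definite. -/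
open Matrix

lemma aux_posDef_blockDiagonal {n o : Type*} [Fintype n] [Fintype o] [DecidableEq n]
    [DecidableEq o] {A : Matrix n n ℝ} (hA : A.PosDef) :
    (blockDiagonal fun _ : o => A).PosDef := by
  rw [posDef_iff_dotProduct_mulVec]
  constructor
  · show _ = _
    rw [blockDiagonal_conjTranspose,
      show (fun _ : o => Aᴴ) = (fun _ : o => A) from funext fun _ => hA.1.eq]
  · intro x hx
    have key : star x ⬝ᵥ ((blockDiagonal fun _ : o => A) *ᵥ x) =
        ∑ j : o, star (fun i => x (i, j)) ⬝ᵥ (A *ᵥ fun i => x (i, j)) := by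
      simp only [dotProduct, mulVec, blockDiagonal_apply, Fintype.sum_prod_type,
        ite_mul, zero_mul, mul_ite, mul_zero, star_trivial]
      rw [Finset.sum_comm]
      simp [Finset.sum_ite_eq]
    rw [key]
    obtain ⟨⟨i0, j0⟩, hij⟩ := Function.ne_iff.mp hx
    apply Finset.sum_pos' (fun j _ => hA.posSemidef.dotProduct_mulVec_nonneg _)
    exact ⟨j0, Finset.mem_univ _, hA.dotProduct_mulVec_pos fun h => hij (congrFun h i0)⟩

lemma aux_blockDiagonal_inv {n o : Type*} [Fintype n] [Fintype o] [DecidableEq n]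
    [DecidableEq o] {A : Matrix n n ℝ} (hA : IsUnit A.det) :
    (blockDiagonal fun _ : o => A)⁻¹ = blockDiagonal fun _ : o => A⁻¹ := by
  apply Matrix.inv_eq_left_inv
  rw [← blockDiagonal_mul]
  have : (fun k : o => A⁻¹ * A) = fun _ : o => (1 : Matrix n n ℝ) := by
    funext k; exact Matrix.nonsing_inv_mul _ hA
  rw [this]; exact blockDiagonal_one

variable {L m : ℕ} [NeZero m]

/-- the arrowhead matrix -/
def auxM (Z : Fin m → Matrix (Fin L) (Fin L) ℝ) : Matrix (Fin m × Fin L) (Fin m × Fin L) ℝ :=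
  Matrix.of fun p q : Fin m × Fin L =>
    if p.1 = q.1 then Z 0 p.2 q.2
    else if p.1 = 0 then Z q.1 p.2 q.2
    else if q.1 = 0 then Z p.1 p.2 q.2
    else 0

/-- the off-diagonal block row -/
def auxB (Z : Fin m → Matrix (Fin L) (Fin L) ℝ) :
    Matrix (Fin L) (Fin L × {j : Fin m // j ≠ 0}) ℝ :=
  Matrix.of fun k lj => Z lj.2.1 k lj.1

def auxE (L m : ℕ) [NeZero m] : (Fin L × {j : Fin m // j ≠ 0}) ⊕ Fin L ≃ Fin m × Fin L where
  toFun := Sum.elim (fun lj => (lj.2.1, lj.1)) (fun k => (0, k))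
  invFun p := if h : p.1 = 0 then Sum.inr p.2 else Sum.inl (p.2, ⟨p.1, h⟩)
  left_inv := by
    rintro (⟨l, ⟨j, hj⟩⟩ | k)
    · simp [hj]
    · simp
  right_inv := by rintro ⟨j, l⟩; by_cases h : j = 0 <;> simp [h]

lemma auxM_submatrix (Z : Fin m → Matrix (Fin L) (Fin L) ℝ) (hs : ∀ i, (Z i).IsSymm) :
    (auxM Z).submatrix (auxE L m) (auxE L m) =
      fromBlocks (blockDiagonal fun _ : {j : Fin m // j ≠ 0} => Z 0)
        (auxB Z)ᴴ (auxB Z) (Z 0) := by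
  ext p q
  rcases p with ⟨l, ⟨j, hj⟩⟩ | k <;> rcases q with ⟨l', ⟨j', hj'⟩⟩ | k'
  · simp only [auxM, auxB, auxE, fromBlocks, blockDiagonal_apply, submatrix_apply,
      Equiv.coe_fn_mk, Sum.elim_inl, of_apply, Subtype.ext_iff]
    split_ifs with h1 h2 h3 <;> simp_all
  · simp [auxM, auxB, auxE, fromBlocks, submatrix_apply, hj]
    exact ((hs j).apply l k').symm
  · simp [auxM, auxB, auxE, fromBlocks, submatrix_apply, hj', (Ne.symm hj')]
  · simp [auxM, auxB, auxE, fromBlocks, submatrix_apply]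

lemma auxB_schur (Z : Fin m → Matrix (Fin L) (Fin L) ℝ) (hs : ∀ i, (Z i).IsSymm)
    (C : Matrix (Fin L) (Fin L) ℝ) :
    auxB Z * blockDiagonal (fun _ : {j : Fin m // j ≠ 0} => C) * (auxB Z)ᴴ =
      ∑ j ∈ Finset.univ.erase (0 : Fin m), Z j * C * Z j := by
  have hsub : ∑ j ∈ Finset.univ.erase (0 : Fin m), Z j * C * Z j =
      ∑ j : {j : Fin m // j ≠ 0}, Z j.1 * C * Z j.1 := by
    exact Finset.sum_subtype (p := fun j : Fin m => j ≠ 0) _ (fun j => by simp)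
      (fun j => Z j * C * Z j)
  rw [hsub]
  ext k k'
  simp only [mul_apply, conjTranspose_apply, blockDiagonal_apply, auxB, of_apply,
    Fintype.sum_prod_type, star_trivial, Finset.sum_apply, Matrix.sum_apply]
  simp only [mul_ite, mul_zero, Finset.sum_ite_eq', Finset.mem_univ, if_true]
  rw [Finset.sum_comm]
  refine Finset.sum_congr rfl fun j _ => Finset.sum_congr rfl fun x _ => ?_
  congr 1
  exact ((hs j.1).apply k' x).symm

lemma aux_continuous_auxM :
    Continuous (fun Z : Fin m → Matrix (Fin L) (Fin L) ℝ => auxM Z) := by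
  refine continuous_matrix fun p q => ?_
  dsimp only [auxM, Matrix.of_apply]
  split_ifs <;>
    first
      | exact ((continuous_apply _).matrix_elem _ _)
      | exact continuous_const

lemma aux_isClosed :
    IsClosed {Z : Fin m → Matrix (Fin L) (Fin L) ℝ |
      (∀ i, (Z i).IsSymm) ∧ (auxM Z).PosSemidef} := by
  have hc := aux_continuous_auxM (L := L) (m := m)
  have heq : {Z : Fin m → Matrix (Fin L) (Fin L) ℝ |
      (∀ i, (Z i).IsSymm) ∧ (auxM Z).PosSemidef} =
      (⋂ i, {Z : Fin m → Matrix (Fin L) (Fin L) ℝ | (Z i)ᵀ = Z i}) ∩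
      ({Z : Fin m → Matrix (Fin L) (Fin L) ℝ | (auxM Z)ᴴ = auxM Z} ∩
        ⋂ x : Fin m × Fin L → ℝ,
          {Z : Fin m → Matrix (Fin L) (Fin L) ℝ | 0 ≤ star x ⬝ᵥ (auxM Z *ᵥ x)}) := by
    ext Z
    simp only [Set.mem_setOf_eq, Set.mem_inter_iff, Set.mem_iInter,
      Matrix.posSemidef_iff_dotProduct_mulVec, Matrix.IsHermitian, Matrix.IsSymm, dotProduct_mulVec]
  rw [heq]
  refine (isClosed_iInter fun i =>
      isClosed_eq ((continuous_apply i).matrix_transpose) (continuous_apply i)).inter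
    ((isClosed_eq hc.matrix_conjTranspose hc).inter
      (isClosed_iInter fun x => isClosed_le continuous_const ?_))
  exact continuous_const.dotProduct (hc.matrix_mulVec continuous_const)

lemma aux_posDef_submatrix {n o : Type*} [Fintype n] [Fintype o] [DecidableEq n] [DecidableEq o]
    (e : o ≃ n) {M : Matrix n n ℝ} (hM : M.PosDef) : (M.submatrix e e).PosDef := by
  refine posDef_iff_dotProduct_mulVec.mpr ⟨hM.1.submatrix e, fun x hx => ?_⟩
  have hx' : x ∘ e.symm ≠ 0 := fun h => hx (funext fun i => by simpa using congrFun h (e i))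
  have h2 := hM.dotProduct_mulVec_pos hx'
  rw [submatrix_mulVec_equiv]
  have heq : star x ⬝ᵥ ((M *ᵥ (x ∘ ⇑e.symm)) ∘ ⇑e)
      = star (x ∘ ⇑e.symm) ⬝ᵥ (M *ᵥ (x ∘ ⇑e.symm)) := by
    rw [← comp_equiv_symm_dotProduct]
    rfl
  rw [heq]
  exact h2

lemma aux_smul_one_posDef {n : Type*} [Fintype n] [DecidableEq n] {ε : ℝ} (hε : 0 < ε) :
    (ε • (1 : Matrix n n ℝ)).PosDef := by
  refine posDef_iff_dotProduct_mulVec.mpr ⟨by simp [Matrix.IsHermitian, conjTranspose_smul], fun x hx => ?_⟩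
  have : star x ⬝ᵥ ((ε • (1 : Matrix n n ℝ)) *ᵥ x) = ε * ∑ i, x i * x i := by
    simp only [smul_mulVec, one_mulVec, dotProduct, Pi.smul_apply, smul_eq_mul,
      star_trivial, Finset.mul_sum]
    exact Finset.sum_congr rfl fun i _ => by ring
  rw [this]
  obtain ⟨i0, hi0⟩ := Function.ne_iff.mp hx
  exact mul_pos hε (Finset.sum_pos' (fun i _ => mul_self_nonneg _)
    ⟨i0, Finset.mem_univ _, mul_self_pos.mpr hi0⟩)

lemma aux_Z0_psd {Z : Fin m → Matrix (Fin L) (Fin L) ℝ} (hM : (auxM Z).PosSemidef) :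
    (Z 0).PosSemidef := by
  have h := hM.submatrix (fun k : Fin L => ((0 : Fin m), k))
  have : (auxM Z).submatrix (fun k : Fin L => ((0 : Fin m), k))
      (fun k : Fin L => ((0 : Fin m), k)) = Z 0 := by
    ext k k'
    simp [auxM]
  rwa [this] at h

lemma aux_update (Z : Fin m → Matrix (Fin L) (Fin L) ℝ) (ε : ℝ) :
    auxM (Function.update Z 0 (Z 0 + ε • 1)) =
      auxM Z + ε • (1 : Matrix (Fin m × Fin L) (Fin m × Fin L) ℝ) := by
  ext ⟨i, k⟩ ⟨i', k'⟩
  simp only [auxM, of_apply, Matrix.add_apply, Matrix.smul_apply, Matrix.one_apply,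
    smul_eq_mul, Prod.mk.injEq]
  by_cases h1 : i = i'
  · subst h1
    simp only [if_pos rfl, Function.update_self, Matrix.add_apply, Matrix.smul_apply,
      Matrix.one_apply, smul_eq_mul, true_and]
    by_cases h2 : k = k' <;> simp [h2]
  · simp only [if_neg h1, h1, false_and, if_false, mul_zero, add_zero]
    by_cases h2 : i = 0
    · subst h2
      rw [if_pos rfl, if_pos rfl, Function.update_of_ne (fun h => h1 h.symm)]
    · rw [if_neg h2, if_neg h2]
      by_cases h3 : i' = 0
      · subst h3
        rw [if_pos rfl, if_pos rfl, Function.update_of_ne h2]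
      · rw [if_neg h3, if_neg h3]

lemma aux_posDef_schur {l n : Type*} [Fintype l] [Fintype n] [DecidableEq l] [DecidableEq n]
    {A : Matrix l l ℝ} {B : Matrix l n ℝ} {D : Matrix n n ℝ} (hA : A.PosDef) [Invertible A]
    (h : (fromBlocks A B Bᴴ D).PosDef) : (D - Bᴴ * A⁻¹ * B).PosDef := by
  rw [posDef_iff_dotProduct_mulVec]
  constructor
  · exact (Matrix.IsHermitian.fromBlocks₁₁ B D hA.1).mp h.1
  · intro x hx
    have hy : Sum.elim (-((A⁻¹ * B) *ᵥ x)) x ≠ 0 := by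
      intro h0
      exact hx (funext fun i => congrFun h0 (Sum.inr i))
    have := h.dotProduct_mulVec_pos hy
    rw [dotProduct_mulVec, Matrix.schur_complement_eq₁₁ B D _ _ hA.1, neg_add_cancel,
      dotProduct_zero, zero_add] at this
    rw [dotProduct_mulVec]
    exact this

/-- The set of tuples (A, B₂, …, Bₘ) of symmetric matrices whose block arrowhead matrix is
positive semidefinite equals the closure of the set of tuples with A positive definite and
A − Σ_{j=2}^m Bⱼ A⁻¹ Bⱼ positive definite. -/
theorem stmt_9 (L m : ℕ) (hL : 1 ≤ L) [NeZero m] (hm : 2 ≤ m) :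
    {Z : Fin m → Matrix (Fin L) (Fin L) ℝ | (∀ i, (Z i).IsSymm) ∧
      (Matrix.of fun p q : Fin m × Fin L =>
        if p.1 = q.1 then Z 0 p.2 q.2
        else if p.1 = 0 then Z q.1 p.2 q.2
        else if q.1 = 0 then Z p.1 p.2 q.2
        else 0).PosSemidef} =
    closure {Z : Fin m → Matrix (Fin L) (Fin L) ℝ | (∀ i, (Z i).IsSymm) ∧
      (Z 0).PosDef ∧
      (Z 0 - ∑ j ∈ Finset.univ.erase (0 : Fin m),
        Z j * (Z 0)⁻¹ * Z j).PosDef} := by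
  have hsub : {Z : Fin m → Matrix (Fin L) (Fin L) ℝ | (∀ i, (Z i).IsSymm) ∧
      (Z 0).PosDef ∧
      (Z 0 - ∑ j ∈ Finset.univ.erase (0 : Fin m),
        Z j * (Z 0)⁻¹ * Z j).PosDef} ⊆
      {Z : Fin m → Matrix (Fin L) (Fin L) ℝ | (∀ i, (Z i).IsSymm) ∧ (auxM Z).PosSemidef} := by
    rintro Z ⟨hsym, hA, hschur⟩
    refine ⟨hsym, ?_⟩
    have hD : (blockDiagonal fun _ : {j : Fin m // j ≠ 0} => Z 0).PosDef :=
      aux_posDef_blockDiagonal hA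
    haveI := hD.isUnit.invertible
    rw [← posSemidef_submatrix_equiv (auxE L m), auxM_submatrix Z hsym]
    have hrw : fromBlocks (blockDiagonal fun _ : {j : Fin m // j ≠ 0} => Z 0)
        (auxB Z)ᴴ (auxB Z) (Z 0) =
        fromBlocks (blockDiagonal fun _ : {j : Fin m // j ≠ 0} => Z 0)
        (auxB Z)ᴴ ((auxB Z)ᴴ)ᴴ (Z 0) := by
      rw [conjTranspose_conjTranspose]
    rw [hrw, PosDef.fromBlocks₁₁ _ _ hD]
    rw [conjTranspose_conjTranspose,
      aux_blockDiagonal_inv (isUnit_iff_ne_zero.mpr hA.det_pos.ne'),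
      auxB_schur Z hsym]
    exact hschur.posSemidef
  apply Set.Subset.antisymm
  · -- PSD set ⊆ closure
    rintro Z ⟨hsym, hM0⟩
    have hM : (auxM Z).PosSemidef := hM0
    have hZ0 : (Z 0).PosSemidef := aux_Z0_psd hM
    refine mem_closure_of_tendsto (f := fun n : ℕ =>
      Function.update Z 0 (Z 0 + (1 / ((n : ℝ) + 1)) • 1)) (b := Filter.atTop) ?_
      (Filter.Eventually.of_forall fun n => ?_)
    · rw [tendsto_pi_nhds]
      intro i
      by_cases hi : i = 0
      · subst hi
        simp only [Function.update_self]
        have h1 : Filter.Tendsto (fun n : ℕ => (1 / ((n : ℝ) + 1))) Filter.atTop (nhds 0) :=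
          tendsto_one_div_add_atTop_nhds_zero_nat
        have h2 := h1.smul_const (1 : Matrix (Fin L) (Fin L) ℝ)
        rw [zero_smul] at h2
        simpa using tendsto_const_nhds.add h2
      · simp only [Function.update_of_ne hi]
        exact tendsto_const_nhds
    · -- membership in the inner set
      set ε : ℝ := 1 / ((n : ℝ) + 1) with hε_def
      have hε : 0 < ε := by positivity
      set W : Fin m → Matrix (Fin L) (Fin L) ℝ := Function.update Z 0 (Z 0 + ε • 1) with hW_def
      have hW0 : W 0 = Z 0 + ε • 1 := Function.update_self _ _ _
      have hsymW : ∀ i, (W i).IsSymm := by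
        intro i
        by_cases hi : i = 0
        · subst hi
          rw [hW0]
          show (Z 0 + ε • 1)ᵀ = _
          rw [transpose_add, transpose_smul, transpose_one, hsym 0]
        · rw [hW_def, Function.update_of_ne hi]
          exact hsym i
      have hA' : (W 0).PosDef := by
        rw [hW0]
        exact Matrix.PosDef.posSemidef_add hZ0 (aux_smul_one_posDef hε)
      have hMW : (auxM W).PosDef := by
        rw [hW_def, aux_update]
        exact Matrix.PosDef.posSemidef_add hM (aux_smul_one_posDef hε)
      have hD : (blockDiagonal fun _ : {j : Fin m // j ≠ 0} => W 0).PosDef :=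
        aux_posDef_blockDiagonal hA'
      haveI := hD.isUnit.invertible
      have h2 : ((auxM W).submatrix (auxE L m) (auxE L m)).PosDef :=
        aux_posDef_submatrix _ hMW
      rw [auxM_submatrix W hsymW] at h2
      have h3 : (fromBlocks (blockDiagonal fun _ : {j : Fin m // j ≠ 0} => W 0)
          ((auxB W)ᴴ) ((auxB W)ᴴ)ᴴ (W 0)).PosDef := by
        rwa [conjTranspose_conjTranspose]
      have h4 := aux_posDef_schur hD h3
      rw [conjTranspose_conjTranspose,
        aux_blockDiagonal_inv (isUnit_iff_ne_zero.mpr hA'.det_pos.ne'),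
        auxB_schur W hsymW] at h4
      exact ⟨hsymW, hA', h4⟩
  · -- closure ⊆ PSD set
    exact closure_minimal hsub aux_isClosed
end

section
/- Fix integers m ≥ 2 and U, L ≥ 1 and a real U×L matrix P. Define Λ(s) = Pᵀ Diag(s) P for s ∈ ℝ^U and Λ*(S) = diag(P S Pᵀ) for real L×L matrices S. Define K ⊆ (ℝ^U)^m as the set of tuples (s₁, …, sₘ) such that there exist real symmetric positive semidefinite L×L matrices S₁ and S_{i,+}, S_{i,−} for i ∈ {2, …, m} with s₁ = Λ*(S₁) + Σ_{i=2}^{m} Λ*(S_{i,+} + S_{i,−}) and sᵢ = Λ*(S_{i,+}) − Λ*(S_{i,−}) for each i ∈ {2, …, m}. Then the dual cone of K with respect to the inner product ⟨(s₁,…,sₘ), (t₁,…,tₘ)⟩ = Σ_{i=1}^{m} ⟨sᵢ, tᵢ⟩ equals the set of tuples (s₁, …, sₘ) such that Λ(s₁ + sᵢ) and Λ(s₁ − sᵢ) are positive semidefinite for every i ∈ {2, …, m}. -/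
open Matrix

private lemma key' {U L : ℕ} (P : Matrix (Fin U) (Fin L) ℝ) (S : Matrix (Fin L) (Fin L) ℝ)
    (t : Fin U → ℝ) :
    (P * S * Pᵀ).diag ⬝ᵥ t = ((Pᵀ * diagonal t * P) * S).trace := by
  simp only [dotProduct, diag, trace, diag_apply, mul_apply, transpose_apply, diagonal,
    Finset.sum_mul, Finset.mul_sum, of_apply]
  rw [Finset.sum_comm]
  refine Finset.sum_congr rfl fun a _ => ?_
  rw [Finset.sum_comm]
  refine Finset.sum_congr rfl fun b _ => ?_
  rw [Finset.sum_comm]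
  refine Finset.sum_congr rfl fun u _ => ?_
  simp only [ite_mul, zero_mul, mul_ite, mul_zero, Finset.sum_ite_eq, Finset.mem_univ, if_pos]
  ring

open scoped MatrixOrder in
private lemma psd_exists' {n : ℕ} {A : Matrix (Fin n) (Fin n) ℝ} (hA : A.PosSemidef) :
    ∃ B : Matrix (Fin n) (Fin n) ℝ, A = Bᴴ * B := by
  obtain ⟨X, hX, -, hXA⟩ :=
    CFC.exists_sqrt_of_isSelfAdjoint_of_quasispectrumRestricts hA.isHermitian
      (QuasispectrumRestricts.nnreal_of_nonneg hA.nonneg)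
  exact ⟨X, by rw [← hXA, ← star_eq_conjTranspose, hX.star_eq]⟩

private lemma trace_mul_nonneg' {n : ℕ} {A S : Matrix (Fin n) (Fin n) ℝ} (hA : A.PosSemidef)
    (hS : S.PosSemidef) : 0 ≤ (A * S).trace := by
  obtain ⟨B, rfl⟩ := psd_exists' hA
  obtain ⟨C, rfl⟩ := psd_exists' hS
  have : (Bᴴ * B * (Cᴴ * C)).trace = ((B * Cᴴ) * (B * Cᴴ)ᴴ).trace := by
    rw [Matrix.mul_assoc, Matrix.mul_assoc, trace_mul_comm, conjTranspose_mul,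
      conjTranspose_conjTranspose, Matrix.mul_assoc, Matrix.mul_assoc]
  rw [this]
  simp only [trace, diag_apply, mul_apply, conjTranspose_apply, star_trivial]
  exact Finset.sum_nonneg fun i _ => Finset.sum_nonneg fun j _ => mul_self_nonneg _

private lemma lam_herm' {U L : ℕ} (P : Matrix (Fin U) (Fin L) ℝ) (t : Fin U → ℝ) :
    (Pᵀ * diagonal t * P).IsHermitian := by
  have := isHermitian_conjTranspose_mul_mul P (isHermitian_diagonal t)
  simpa [conjTranspose_eq_transpose_of_trivial] using this

private lemma trace_mul_vecMulVec' {n : ℕ} (A : Matrix (Fin n) (Fin n) ℝ) (x : Fin n → ℝ) :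
    (A * vecMulVec x x).trace = x ⬝ᵥ (A *ᵥ x) := by
  simp only [trace, diag_apply, mul_apply, vecMulVec_apply, dotProduct, mulVec, Finset.mul_sum]
  refine Finset.sum_congr rfl fun a _ => Finset.sum_congr rfl fun b _ => by ring

private lemma vecMulVec_psd' {n : ℕ} (x : Fin n → ℝ) : (vecMulVec x x).PosSemidef := by
  refine .of_dotProduct_mulVec_nonneg ?_ ?_
  · ext i j
    simp [vecMulVec_apply, conjTranspose_apply, mul_comm]
  · intro z
    have : star z ⬝ᵥ (vecMulVec x x *ᵥ z) = (x ⬝ᵥ z) * (x ⬝ᵥ z) := by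
      simp only [star_trivial, dotProduct, mulVec, vecMulVec_apply, Finset.mul_sum,
        Finset.sum_mul]
      refine Finset.sum_congr rfl fun a _ => Finset.sum_congr rfl fun b _ => by ring
    rw [this]
    exact mul_self_nonneg _

private lemma sum_dot' {β : Type*} {U : ℕ} (s : Finset β) (v : β → Fin U → ℝ) (w : Fin U → ℝ) :
    (∑ j ∈ s, v j) ⬝ᵥ w = ∑ j ∈ s, v j ⬝ᵥ w := by
  simp only [dotProduct, Finset.sum_apply, Finset.sum_mul]
  exact Finset.sum_comm

/-- The dual cone of the SOS-ℓ1 cone K (defined via Λ*(S) = diag(P S Pᵀ)) equals the set of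
tuples (s₁, …, sₘ) with Λ(s₁ + sᵢ) ⪰ 0 and Λ(s₁ − sᵢ) ⪰ 0 for all i ∈ {2, …, m},
where Λ(s) = Pᵀ Diag(s) P. -/
theorem stmt_12 (m U L : ℕ) [NeZero m] (hm : 2 ≤ m) (hU : 1 ≤ U) (hL : 1 ≤ L)
    (P : Matrix (Fin U) (Fin L) ℝ) :
    {t : Fin m → Fin U → ℝ | ∀ s ∈ {s : Fin m → Fin U → ℝ |
        ∃ (S1 : Matrix (Fin L) (Fin L) ℝ)
          (Sp Sm : Fin m → Matrix (Fin L) (Fin L) ℝ),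
          S1.PosSemidef ∧
          (∀ i : Fin m, i ≠ 0 → (Sp i).PosSemidef ∧ (Sm i).PosSemidef) ∧
          s 0 = (P * S1 * Pᵀ).diag +
            ∑ i ∈ Finset.univ.erase (0 : Fin m), (P * (Sp i + Sm i) * Pᵀ).diag ∧
          ∀ i : Fin m, i ≠ 0 → s i = (P * Sp i * Pᵀ).diag - (P * Sm i * Pᵀ).diag},
      0 ≤ ∑ i, s i ⬝ᵥ t i} =
    {s : Fin m → Fin U → ℝ | ∀ i : Fin m, i ≠ 0 →
      (Pᵀ * Matrix.diagonal (s 0 + s i) * P).PosSemidef ∧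
      (Pᵀ * Matrix.diagonal (s 0 - s i) * P).PosSemidef} := by
  ext t
  simp only [Set.mem_setOf_eq]
  constructor
  · intro h i hi
    constructor
    · refine .of_dotProduct_mulVec_nonneg (lam_herm' P _) fun x => ?_
      obtain ⟨d, hd⟩ : ∃ d, d = (P * vecMulVec x x * Pᵀ).diag := ⟨_, rfl⟩
      have hs := h (fun j => if j = 0 then d else if j = i then d else 0) (by
        refine ⟨0, (fun j => if j = i then vecMulVec x x else 0), 0, Matrix.PosSemidef.zero,
          fun j hj => ⟨?_, Matrix.PosSemidef.zero⟩, ?_, ?_⟩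
        · dsimp only
          split
          exacts [vecMulVec_psd' x, Matrix.PosSemidef.zero]
        · simp only [if_pos rfl, if_true, eq_self_iff_true, Pi.zero_apply, add_zero]
          rw [Matrix.mul_zero, Matrix.zero_mul, diag_zero, zero_add]
          rw [show (∑ j ∈ Finset.univ.erase (0 : Fin m),
              (P * (if j = i then vecMulVec x x else 0) * Pᵀ).diag)
              = ∑ j ∈ Finset.univ.erase (0 : Fin m), (if j = i then d else 0) from
            Finset.sum_congr rfl fun j _ => by
              split
              · exact hd.symm
              · simp]
          rw [Finset.sum_ite_eq' _ i, if_pos (Finset.mem_erase.mpr ⟨hi, Finset.mem_univ i⟩)]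
        · intro j hj
          simp only [if_neg hj, Pi.zero_apply]
          rw [Matrix.mul_zero, Matrix.zero_mul, diag_zero, sub_zero]
          split
          · exact hd
          · simp)
      rw [← Finset.add_sum_erase _ _ (Finset.mem_univ (0 : Fin m))] at hs
      rw [Finset.sum_eq_single_of_mem i
        (Finset.mem_erase.mpr ⟨hi, Finset.mem_univ i⟩)
        (fun j hj hji => by
          simp only [if_neg (Finset.mem_erase.mp hj).1, if_neg hji, zero_dotProduct])] at hs
      simp only [if_pos rfl, if_true, eq_self_iff_true, if_neg hi] at hs
      rw [star_trivial, ← trace_mul_vecMulVec', ← key', dotProduct_add, ← hd]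
      exact hs
    · refine .of_dotProduct_mulVec_nonneg (lam_herm' P _) fun x => ?_
      obtain ⟨d, hd⟩ : ∃ d, d = (P * vecMulVec x x * Pᵀ).diag := ⟨_, rfl⟩
      have hs := h (fun j => if j = 0 then d else if j = i then -d else 0) (by
        refine ⟨0, 0, (fun j => if j = i then vecMulVec x x else 0), Matrix.PosSemidef.zero,
          fun j hj => ⟨Matrix.PosSemidef.zero, ?_⟩, ?_, ?_⟩
        · dsimp only
          split
          exacts [vecMulVec_psd' x, Matrix.PosSemidef.zero]
        · simp only [if_pos rfl, if_true, eq_self_iff_true, Pi.zero_apply, zero_add]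
          rw [Matrix.mul_zero, Matrix.zero_mul, diag_zero, zero_add]
          rw [show (∑ j ∈ Finset.univ.erase (0 : Fin m),
              (P * (if j = i then vecMulVec x x else 0) * Pᵀ).diag)
              = ∑ j ∈ Finset.univ.erase (0 : Fin m), (if j = i then d else 0) from
            Finset.sum_congr rfl fun j _ => by
              split
              · exact hd.symm
              · simp]
          rw [Finset.sum_ite_eq' _ i, if_pos (Finset.mem_erase.mpr ⟨hi, Finset.mem_univ i⟩)]
        · intro j hj
          simp only [if_neg hj, Pi.zero_apply]
          rw [Matrix.mul_zero, Matrix.zero_mul, diag_zero, zero_sub]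
          split
          · rw [hd]
          · simp)
      rw [← Finset.add_sum_erase _ _ (Finset.mem_univ (0 : Fin m))] at hs
      rw [Finset.sum_eq_single_of_mem i
        (Finset.mem_erase.mpr ⟨hi, Finset.mem_univ i⟩)
        (fun j hj hji => by
          simp only [if_neg (Finset.mem_erase.mp hj).1, if_neg hji, zero_dotProduct])] at hs
      simp only [if_pos rfl, if_true, eq_self_iff_true, if_neg hi, neg_dotProduct] at hs
      rw [star_trivial, ← trace_mul_vecMulVec', ← key', dotProduct_sub, ← hd]
      linarith
  · intro h s hs
    obtain ⟨S1, Sp, Sm, hS1, hpm, h0, hrest⟩ := hs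
    have h1 : (1 : Fin m) ≠ 0 := by
      intro hc
      have := congrArg Fin.val hc
      rw [Fin.val_one'] at this
      simp [Nat.mod_eq_of_lt (by omega : 1 < m)] at this
    have hΛ0 : (Pᵀ * diagonal (t 0) * P).PosSemidef := by
      refine .of_dotProduct_mulVec_nonneg (lam_herm' P _) fun x => ?_
      have a := (h 1 h1).1.dotProduct_mulVec_nonneg x
      have b := (h 1 h1).2.dotProduct_mulVec_nonneg x
      have e : star x ⬝ᵥ ((Pᵀ * diagonal (t 0 + t 1) * P) *ᵥ x)
            + star x ⬝ᵥ ((Pᵀ * diagonal (t 0 - t 1) * P) *ᵥ x)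
          = 2 * (star x ⬝ᵥ ((Pᵀ * diagonal (t 0) * P) *ᵥ x)) := by
        have hdiag : diagonal (t 0 + t 1) + diagonal (t 0 - t 1)
            = diagonal (t 0) + diagonal (t 0) := by
          ext a b
          rcases eq_or_ne a b with rfl | hab
          · simp only [Matrix.add_apply, diagonal_apply_eq, Pi.add_apply, Pi.sub_apply]
            ring
          · simp [diagonal_apply_ne _ hab]
        rw [← dotProduct_add, ← add_mulVec, ← Matrix.add_mul, ← Matrix.mul_add, hdiag,
          Matrix.mul_add, Matrix.add_mul, add_mulVec, dotProduct_add]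
        ring
      linarith
    rw [← Finset.add_sum_erase _ _ (Finset.mem_univ (0 : Fin m)), h0, add_dotProduct,
      sum_dot', add_assoc, ← Finset.sum_add_distrib]
    refine add_nonneg ?_ (Finset.sum_nonneg fun i hi => ?_)
    · rw [key']
      exact trace_mul_nonneg' hΛ0 hS1
    · have hi0 := (Finset.mem_erase.mp hi).1
      have hp := trace_mul_nonneg' (h i hi0).1 (hpm i hi0).1
      have hq := trace_mul_nonneg' (h i hi0).2 (hpm i hi0).2
      rw [← key'] at hp hq
      rw [dotProduct_add] at hp
      rw [dotProduct_sub] at hq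
      rw [hrest i hi0, Matrix.mul_add, Matrix.add_mul, diag_add, add_dotProduct,
        sub_dotProduct]
      linarith
end

section
/- Fix integers L ≥ 1 and m ≥ 2. The set of tuples (X, Y₂, …, Yₘ) of real symmetric L×L matrices such that X + Yᵢ and X − Yᵢ are positive semidefinite for every i ∈ {2, …, m} equals the closure (in the Euclidean topology on tuples of matrices) of the set of tuples of real symmetric L×L matrices such that X is positive definite and X − Yᵢ X⁻¹ Yᵢ is positive definite for every i ∈ {2, …, m}. -/
open Matrix Filter Topology

namespace Stmt13Aux

variable {L : ℕ}

lemma symm_herm {A : Matrix (Fin L) (Fin L) ℝ} (h : A.IsSymm) : A.IsHermitian := by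
  rwa [Matrix.IsHermitian, conjTranspose_eq_transpose_of_trivial]

lemma dot_symm {A : Matrix (Fin L) (Fin L) ℝ} (h : A.IsSymm) (v w : Fin L → ℝ) :
    v ⬝ᵥ (A *ᵥ w) = w ⬝ᵥ (A *ᵥ v) := by
  rw [dotProduct_mulVec, ← mulVec_transpose, h.eq, dotProduct_comm]

lemma schur_symm {X Y : Matrix (Fin L) (Fin L) ℝ} (hXs : X.IsSymm) (hY : Y.IsSymm) :
    (X - Y * X⁻¹ * Y).IsSymm := by
  have h1 : (X⁻¹ : Matrix (Fin L) (Fin L) ℝ)ᵀ = X⁻¹ := by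
    rw [transpose_nonsing_inv, hXs.eq]
  simp only [Matrix.IsSymm] at hXs hY ⊢
  rw [transpose_sub, transpose_mul, transpose_mul, hXs, hY, h1, mul_assoc]

lemma key_facts {X Y : Matrix (Fin L) (Fin L) ℝ} (hX : X.PosDef) (v : Fin L → ℝ) :
    X *ᵥ ((X⁻¹ * Y) *ᵥ v) = Y *ᵥ v := by
  rw [mulVec_mulVec, ← mul_assoc, mul_nonsing_inv _ ((isUnit_iff_isUnit_det X).mp hX.isUnit),
    one_mul]

lemma schur_val {X Y : Matrix (Fin L) (Fin L) ℝ} (hX : X.PosDef) (hY : Y.IsSymm)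
    (v : Fin L → ℝ) :
    v ⬝ᵥ ((X - Y * X⁻¹ * Y) *ᵥ v)
      = v ⬝ᵥ (X *ᵥ v) - ((X⁻¹ * Y) *ᵥ v) ⬝ᵥ (X *ᵥ ((X⁻¹ * Y) *ᵥ v)) := by
  set u := (X⁻¹ * Y) *ᵥ v with hu
  rw [sub_mulVec, dotProduct_sub]
  congr 1
  have h2 : (Y * X⁻¹ * Y) *ᵥ v = Y *ᵥ u := by rw [hu, mulVec_mulVec, mul_assoc]
  rw [h2, dot_symm hY, key_facts hX]

lemma forward {X Y : Matrix (Fin L) (Fin L) ℝ} (hX : X.PosDef) (hXs : X.IsSymm) (hY : Y.IsSymm)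
    (hS : (X - Y * X⁻¹ * Y).PosSemidef) :
    (X + Y).PosSemidef ∧ (X - Y).PosSemidef := by
  have main : ∀ v : Fin L → ℝ, 0 ≤ v ⬝ᵥ ((X + Y) *ᵥ v) ∧ 0 ≤ v ⬝ᵥ ((X - Y) *ᵥ v) := by
    intro v
    set u := (X⁻¹ * Y) *ᵥ v with hu
    have hschur : 0 ≤ v ⬝ᵥ (X *ᵥ v) - u ⬝ᵥ (X *ᵥ u) := by
      have := hS.dotProduct_mulVec_nonneg v
      rwa [star_trivial, schur_val hX hY] at this
    have hXuv : u ⬝ᵥ (X *ᵥ v) = v ⬝ᵥ (X *ᵥ u) := dot_symm hXs u v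
    have hYvv : v ⬝ᵥ (Y *ᵥ v) = v ⬝ᵥ (X *ᵥ u) := by rw [hu, key_facts hX]
    have hplus : 0 ≤ (v + u) ⬝ᵥ (X *ᵥ (v + u)) := by
      have := hX.posSemidef.dotProduct_mulVec_nonneg (v + u); rwa [star_trivial] at this
    have hminus : 0 ≤ (v - u) ⬝ᵥ (X *ᵥ (v - u)) := by
      have := hX.posSemidef.dotProduct_mulVec_nonneg (v - u); rwa [star_trivial] at this
    simp only [add_mulVec, sub_mulVec, mulVec_add, mulVec_sub, dotProduct_add, dotProduct_sub,
      add_dotProduct, sub_dotProduct] at hplus hminus ⊢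
    rw [hXuv] at hplus hminus
    refine ⟨by rw [hYvv]; linarith, by rw [hYvv]; linarith⟩
  exact ⟨PosSemidef.of_dotProduct_mulVec_nonneg (symm_herm (hXs.add hY)) fun v => by rw [star_trivial]; exact (main v).1,
    PosSemidef.of_dotProduct_mulVec_nonneg (symm_herm (hXs.sub hY)) fun v => by rw [star_trivial]; exact (main v).2⟩

lemma converse {X Y : Matrix (Fin L) (Fin L) ℝ} (hX : X.PosDef) (hXs : X.IsSymm) (hY : Y.IsSymm)
    (h1 : (X + Y).PosDef) (h2 : (X - Y).PosDef) : (X - Y * X⁻¹ * Y).PosDef := by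
  refine PosDef.of_dotProduct_mulVec_pos (symm_herm (schur_symm hXs hY)) fun v hv => ?_
  rw [star_trivial, schur_val hX hY]
  set u := (X⁻¹ * Y) *ᵥ v with hu
  have hXuv : u ⬝ᵥ (X *ᵥ v) = v ⬝ᵥ (X *ᵥ u) := dot_symm hXs u v
  have hYvv : v ⬝ᵥ (Y *ᵥ v) = v ⬝ᵥ (X *ᵥ u) := by rw [hu, key_facts hX]
  have hYvu : v ⬝ᵥ (Y *ᵥ u) = u ⬝ᵥ (X *ᵥ u) := by rw [dot_symm hY, hu, key_facts hX]
  have hYuv : u ⬝ᵥ (Y *ᵥ v) = u ⬝ᵥ (X *ᵥ u) := by rw [hu, key_facts hX]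
  have ht1 : 0 ≤ (v - u) ⬝ᵥ ((X + Y) *ᵥ (v - u)) := by
    have := h1.posSemidef.dotProduct_mulVec_nonneg (v - u); rwa [star_trivial] at this
  have ht2 : 0 ≤ (v + u) ⬝ᵥ ((X - Y) *ᵥ (v + u)) := by
    have := h2.posSemidef.dotProduct_mulVec_nonneg (v + u); rwa [star_trivial] at this
  have hcase : 0 < (v - u) ⬝ᵥ ((X + Y) *ᵥ (v - u)) ∨
      0 < (v + u) ⬝ᵥ ((X - Y) *ᵥ (v + u)) := by
    by_cases hvu : v + u = 0
    · left
      have hne : v - u ≠ 0 := by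
        intro h
        apply hv
        have hv2 : v = (2⁻¹ : ℝ) • ((v + u) + (v - u)) := by
          rw [show (v + u) + (v - u) = (2 : ℝ) • v by module, smul_smul]
          norm_num
        rw [hv2, hvu, h, add_zero, smul_zero]
      have := h1.dotProduct_mulVec_pos hne; rwa [star_trivial] at this
    · right
      have := h2.dotProduct_mulVec_pos hvu; rwa [star_trivial] at this
  simp only [add_mulVec, sub_mulVec, mulVec_add, mulVec_sub, dotProduct_add, dotProduct_sub,
    add_dotProduct, sub_dotProduct] at ht1 ht2 hcase
  rw [hXuv, hYvv, hYvu, hYuv] at ht1 ht2 hcase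
  rcases hcase with h | h
  · linarith
  · linarith

lemma isClosed_psd : IsClosed {M : Matrix (Fin L) (Fin L) ℝ | M.PosSemidef} := by
  have he : {M : Matrix (Fin L) (Fin L) ℝ | M.PosSemidef}
      = {M | M.IsHermitian} ∩ ⋂ v : Fin L → ℝ, {M | 0 ≤ star v ⬝ᵥ (M *ᵥ v)} := by
    ext M
    simp only [Set.mem_setOf_eq, Set.mem_inter_iff, Set.mem_iInter]
    exact posSemidef_iff_dotProduct_mulVec
  rw [he]
  refine (isClosed_eq continuous_id.matrix_conjTranspose continuous_id).inter
    (isClosed_iInter fun v => isClosed_le continuous_const ?_)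
  exact continuous_const.dotProduct (continuous_id.matrix_mulVec continuous_const)

lemma isClosed_symm : IsClosed {M : Matrix (Fin L) (Fin L) ℝ | M.IsSymm} :=
  isClosed_eq continuous_id.matrix_transpose continuous_id

lemma smul_one_posDef {t : ℝ} (ht : 0 < t) : (t • (1 : Matrix (Fin L) (Fin L) ℝ)).PosDef := by
  refine PosDef.of_dotProduct_mulVec_pos (symm_herm (isSymm_one.smul t)) fun v hv => ?_
  rw [star_trivial, smul_mulVec, one_mulVec, dotProduct_smul, smul_eq_mul]
  have hvv : 0 < v ⬝ᵥ v := by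
    have := dotProduct_star_self_pos_iff.mpr hv
    rwa [star_trivial] at this
  exact mul_pos ht hvv

lemma half_psd {A B : Matrix (Fin L) (Fin L) ℝ} (hA : A.IsSymm)
    (h1 : (A + B).PosSemidef) (h2 : (A - B).PosSemidef) : A.PosSemidef := by
  refine PosSemidef.of_dotProduct_mulVec_nonneg (symm_herm hA) fun v => ?_
  have k1 := h1.dotProduct_mulVec_nonneg v
  have k2 := h2.dotProduct_mulVec_nonneg v
  simp only [star_trivial, add_mulVec, sub_mulVec, dotProduct_add, dotProduct_sub] at k1 k2 ⊢
  linarith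

lemma tendsto_pert (A : Matrix (Fin L) (Fin L) ℝ) :
    Tendsto (fun n : ℕ => A + (1 / ((n : ℝ) + 1)) • (1 : Matrix (Fin L) (Fin L) ℝ))
      atTop (𝓝 A) := by
  have h1 : Tendsto (fun n : ℕ => (1 / ((n : ℝ) + 1)) • (1 : Matrix (Fin L) (Fin L) ℝ))
      atTop (𝓝 ((0 : ℝ) • (1 : Matrix (Fin L) (Fin L) ℝ))) :=
    (tendsto_one_div_add_atTop_nhds_zero_nat).smul_const _
  rw [zero_smul] at h1
  simpa using tendsto_const_nhds.add h1

end Stmt13Aux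

open Stmt13Aux

/-- The set of tuples (X, Y₂, …, Yₘ) of symmetric matrices with X + Yᵢ ⪰ 0 and X − Yᵢ ⪰ 0
for all i equals the closure of the set of tuples with X ≻ 0 and X − Yᵢ X⁻¹ Yᵢ ≻ 0 for
all i. -/
theorem stmt_13 (L m : ℕ) (hL : 1 ≤ L) [NeZero m] (hm : 2 ≤ m) :
    {Z : Fin m → Matrix (Fin L) (Fin L) ℝ | (∀ i, (Z i).IsSymm) ∧
      ∀ i : Fin m, i ≠ 0 → (Z 0 + Z i).PosSemidef ∧ (Z 0 - Z i).PosSemidef} =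
    closure {Z : Fin m → Matrix (Fin L) (Fin L) ℝ | (∀ i, (Z i).IsSymm) ∧
      (Z 0).PosDef ∧
      ∀ i : Fin m, i ≠ 0 → (Z 0 - Z i * (Z 0)⁻¹ * Z i).PosDef} := by
  apply Set.Subset.antisymm
  · -- LHS ⊆ closure S
    intro Z hZ
    obtain ⟨hsymm, hcond⟩ := hZ
    have hm1 : (⟨1, lt_of_lt_of_le one_lt_two hm⟩ : Fin m) ≠ 0 := by
      simp [Fin.ext_iff]
    have hZ0 : (Z 0).PosSemidef :=
      half_psd (hsymm 0) (hcond _ hm1).1 (hcond _ hm1).2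
    have hmem : ∀ n : ℕ,
        (Function.update Z 0 (Z 0 + (1 / ((n : ℝ) + 1)) • 1)) ∈
          {Z : Fin m → Matrix (Fin L) (Fin L) ℝ | (∀ i, (Z i).IsSymm) ∧
            (Z 0).PosDef ∧
            ∀ i : Fin m, i ≠ 0 → (Z 0 - Z i * (Z 0)⁻¹ * Z i).PosDef} := by
      intro n
      set t : ℝ := 1 / ((n : ℝ) + 1) with htdef
      have ht : 0 < t := by positivity
      have hX : (Z 0 + t • 1 : Matrix (Fin L) (Fin L) ℝ).PosDef :=
        Matrix.PosDef.posSemidef_add hZ0 (smul_one_posDef ht)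
      have hXs : (Z 0 + t • 1 : Matrix (Fin L) (Fin L) ℝ).IsSymm :=
        (hsymm 0).add (isSymm_one.smul t)
      refine ⟨fun i => ?_, ?_, fun i hi => ?_⟩
      · by_cases hi : i = 0
        · subst hi; rw [Function.update_self]; exact hXs
        · rw [Function.update_of_ne hi]; exact hsymm i
      · rw [Function.update_self]; exact hX
      · rw [Function.update_self, Function.update_of_ne hi]
        refine converse hX hXs (hsymm i) ?_ ?_
        · rw [show Z 0 + t • 1 + Z i = (Z 0 + Z i) + t • (1 : Matrix (Fin L) (Fin L) ℝ)
            by abel]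
          exact Matrix.PosDef.posSemidef_add (hcond i hi).1 (smul_one_posDef ht)
        · rw [show Z 0 + t • 1 - Z i = (Z 0 - Z i) + t • (1 : Matrix (Fin L) (Fin L) ℝ)
            by abel]
          exact Matrix.PosDef.posSemidef_add (hcond i hi).2 (smul_one_posDef ht)
    refine mem_closure_of_tendsto (b := atTop)
      (f := fun n : ℕ => Function.update Z 0 (Z 0 + (1 / ((n : ℝ) + 1)) • 1)) ?_
      (Filter.Eventually.of_forall hmem)
    rw [tendsto_pi_nhds]
    intro i
    by_cases hi : i = 0
    · subst hi
      simpa only [Function.update_self] using tendsto_pert (Z 0)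
    · simp only [Function.update_of_ne hi]
      exact tendsto_const_nhds
  · refine closure_minimal ?_ ?_
    · intro Z hZ
      obtain ⟨hsymm, hpd, hcond⟩ := hZ
      exact ⟨hsymm, fun i hi =>
        forward hpd (hsymm 0) (hsymm i) ((hcond i hi).posSemidef)⟩
    · have he : {Z : Fin m → Matrix (Fin L) (Fin L) ℝ | (∀ i, (Z i).IsSymm) ∧
          ∀ i : Fin m, i ≠ 0 → (Z 0 + Z i).PosSemidef ∧ (Z 0 - Z i).PosSemidef}
          = (⋂ i : Fin m,
              (fun Z : Fin m → Matrix (Fin L) (Fin L) ℝ => Z i) ⁻¹' {M | M.IsSymm}) ∩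
            ⋂ i : Fin m,
              {Z : Fin m → Matrix (Fin L) (Fin L) ℝ |
                i ≠ 0 → (Z 0 + Z i).PosSemidef ∧ (Z 0 - Z i).PosSemidef} := by
        ext Z
        simp only [Set.mem_setOf_eq, Set.mem_inter_iff, Set.mem_iInter, Set.mem_preimage]
      rw [he]
      refine (isClosed_iInter fun i => isClosed_symm.preimage (continuous_apply i)).inter
        (isClosed_iInter fun i => ?_)
      by_cases hi : i = 0
      · have : {Z : Fin m → Matrix (Fin L) (Fin L) ℝ |
            i ≠ 0 → (Z 0 + Z i).PosSemidef ∧ (Z 0 - Z i).PosSemidef} = Set.univ := by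
          ext Z; simp [hi]
        rw [this]; exact isClosed_univ
      · have : {Z : Fin m → Matrix (Fin L) (Fin L) ℝ |
            i ≠ 0 → (Z 0 + Z i).PosSemidef ∧ (Z 0 - Z i).PosSemidef}
            = ((fun Z : Fin m → Matrix (Fin L) (Fin L) ℝ => Z 0 + Z i) ⁻¹'
                {M | M.PosSemidef}) ∩
              ((fun Z : Fin m → Matrix (Fin L) (Fin L) ℝ => Z 0 - Z i) ⁻¹'
                {M | M.PosSemidef}) := by
          ext Z; simp [hi]
        rw [this]
        exact (isClosed_psd.preimage ((continuous_apply 0).add (continuous_apply i))).inter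
          (isClosed_psd.preimage ((continuous_apply 0).sub (continuous_apply i)))
end

section
/- Fix n ≥ 1 and m ≥ 2, and define the product ∘ on m-tuples of real polynomials in n variables by (p ∘ q)₁ = Σ_{j=1}^{m} pⱼ qⱼ and (p ∘ q)ᵢ = p₁ qᵢ + q₁ pᵢ for i ∈ {2, …, m}. Suppose q = (q₁, …, qₘ) is an m-tuple of real polynomials in n variables such that q = Σ_{k=1}^{N} p_k ∘ p_k for some N ∈ ℕ and m-tuples p_k of real polynomials in n variables. Then for every point x ∈ ℝⁿ, q₁(x) ≥ √(Σ_{i=2}^{m} qᵢ(x)²); that is, the evaluation of q at every point lies in the second-order cone. -/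
/-- The product ∘ on m-tuples of real polynomials in n variables:
(p ∘ q)₁ = Σⱼ pⱼ qⱼ and (p ∘ q)ᵢ = p₁ qᵢ + q₁ pᵢ for i ≥ 2. -/
noncomputable def polyCirc (n m : ℕ) [NeZero m]
    (p q : Fin m → MvPolynomial (Fin n) ℝ) : Fin m → MvPolynomial (Fin n) ℝ :=
  fun i => if i = 0 then ∑ j, p j * q j else p 0 * q i + q 0 * p i

/-- If q = Σₖ pₖ ∘ pₖ, then the evaluation of q at every point lies in the second-order
cone: q₁(x) ≥ √(Σ_{i=2}^m qᵢ(x)²). -/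
theorem stmt_16 (n m : ℕ) (hn : 1 ≤ n) [NeZero m] (hm : 2 ≤ m)
    (q : Fin m → MvPolynomial (Fin n) ℝ)
    (N : ℕ) (p : Fin N → Fin m → MvPolynomial (Fin n) ℝ)
    (hq : q = ∑ k, polyCirc n m (p k) (p k)) :
    ∀ x : Fin n → ℝ,
      Real.sqrt (∑ i ∈ Finset.univ.erase (0 : Fin m),
          (MvPolynomial.eval x (q i)) ^ 2) ≤
        MvPolynomial.eval x (q 0) := by
  intro x
  set a : Fin N → ℝ := fun k => MvPolynomial.eval x (p k 0) with ha
  set b : Fin N → Fin m → ℝ := fun k i => MvPolynomial.eval x (p k i) with hb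
  have hq0 : MvPolynomial.eval x (q 0) = ∑ k, ∑ j, (b k j) ^ 2 := by
    subst hq
    simp [polyCirc, Finset.sum_apply, sq, hb]
  have hqi : ∀ i : Fin m, i ≠ 0 →
      MvPolynomial.eval x (q i) = ∑ k, 2 * a k * b k i := by
    intro i hi
    subst hq
    simp only [Finset.sum_apply, polyCirc, if_neg hi, map_sum, map_add, map_mul]
    exact Finset.sum_congr rfl fun k _ => by simp [ha, hb]; ring
  set W : Fin N → EuclideanSpace ℝ (Fin m) :=
    fun k => WithLp.toLp 2 (fun i => if i = 0 then 0 else 2 * a k * b k i) with hW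
  have hVi : ∀ i : Fin m, (∑ k, W k) i = ∑ k, W k i := fun i => by
    rw [WithLp.ofLp_sum, Finset.sum_apply]
  have key : Real.sqrt (∑ i ∈ Finset.univ.erase (0 : Fin m),
      (MvPolynomial.eval x (q i)) ^ 2) = ‖∑ k, W k‖ := by
    rw [EuclideanSpace.norm_eq]
    congr 1
    have h0 : ‖(∑ k, W k) (0 : Fin m)‖ ^ 2 = 0 := by
      rw [hVi]; simp [hW]
    rw [← Finset.sum_erase (f := fun i => ‖(∑ k, W k) i‖ ^ 2) Finset.univ h0]
    refine Finset.sum_congr rfl fun i hi => ?_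
    have hi0 : i ≠ 0 := Finset.ne_of_mem_erase hi
    rw [hqi i hi0, hVi, Real.norm_eq_abs, sq_abs]
    congr 1
    exact Finset.sum_congr rfl fun k _ => by simp [hW, hi0]
  rw [key, hq0]
  calc ‖∑ k, W k‖ ≤ ∑ k, ‖W k‖ := norm_sum_le _ _
    _ ≤ ∑ k, ∑ j, (b k j) ^ 2 := by
        refine Finset.sum_le_sum fun k _ => ?_
        rw [EuclideanSpace.norm_eq]
        have h0 : ‖W k (0 : Fin m)‖ ^ 2 = 0 := by simp [hW]
        have h1 : ∑ i, ‖W k i‖ ^ 2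
            = (2 * |a k|) ^ 2 * ∑ i ∈ Finset.univ.erase (0 : Fin m), b k i ^ 2 := by
          rw [← Finset.sum_erase (f := fun i => ‖W k i‖ ^ 2) Finset.univ h0, Finset.mul_sum]
          refine Finset.sum_congr rfl fun i hi => ?_
          have hi0 : i ≠ 0 := Finset.ne_of_mem_erase hi
          rw [Real.norm_eq_abs, sq_abs]
          simp only [hW, if_neg hi0]
          simp [mul_pow, sq_abs]
        rw [h1, Real.sqrt_mul (by positivity), Real.sqrt_sq (by positivity)]
        have hc : Real.sqrt (∑ i ∈ Finset.univ.erase (0 : Fin m), b k i ^ 2) ^ 2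
            = ∑ i ∈ Finset.univ.erase (0 : Fin m), b k i ^ 2 :=
          Real.sq_sqrt (Finset.sum_nonneg fun _ _ => sq_nonneg _)
        have h2 := two_mul_le_add_sq (|a k|)
          (Real.sqrt (∑ i ∈ Finset.univ.erase (0 : Fin m), b k i ^ 2))
        rw [sq_abs, hc] at h2
        have h3 : ∑ j, b k j ^ 2
            = b k 0 ^ 2 + ∑ i ∈ Finset.univ.erase (0 : Fin m), b k i ^ 2 :=
          (Finset.add_sum_erase _ _ (Finset.mem_univ 0)).symm
        rw [h3]
        exact h2
end

section
/- Fix n ≥ 1 and m ≥ 1, and let Q be a symmetric m×m matrix whose entries are real polynomials in the variables x = (x₁, …, xₙ). Then the polynomial yᵀ Q(x) y in the n + m variables (x₁, …, xₙ, y₁, …, yₘ) is a sum of squares of polynomials if and only if there exist N ∈ ℕ and an N×m matrix M with entries real polynomials in x such that Q = Mᵀ M. -/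
open Matrix MvPolynomial

/-- sum of squares of reals zero implies each zero -/
lemma aux_real_sos {N : ℕ} {f : Fin N → ℝ} (h : ∑ k, (f k)^2 = 0) : ∀ k, f k = 0 := by
  intro k
  have := (Finset.sum_eq_zero_iff_of_nonneg (fun i _ => sq_nonneg (f i))).mp h k (Finset.mem_univ k)
  exact pow_eq_zero_iff (by norm_num) |>.mp this

lemma aux_exists_eval_ne {σ : Type*} {p : MvPolynomial σ ℝ} (hp : p ≠ 0) :
    ∃ y : σ → ℝ, eval y p ≠ 0 := by
  by_contra h
  push_neg at h
  exact hp (MvPolynomial.funext (fun x => by simp [h x]))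

lemma aux_mv_sos {σ : Type*} {N : ℕ} {f : Fin N → MvPolynomial σ ℝ}
    (h : ∑ k, (f k)^2 = 0) : ∀ k, f k = 0 := by
  intro k
  by_contra hk
  obtain ⟨y, hy⟩ := aux_exists_eval_ne hk
  have : ∑ j, (eval y (f j))^2 = 0 := by
    have := congrArg (eval y) h
    simpa [eval_sum] using this
  exact hy (aux_real_sos this k)

lemma aux_coeff_sq {u : Polynomial ℝ} {d : ℕ} (hu : u.natDegree ≤ d) :
    (u^2).coeff (2*d) = (u.coeff d)^2 := by
  rw [sq, sq, Polynomial.coeff_mul]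
  rw [Finset.sum_eq_single_of_mem (d, d) (by simp [Finset.mem_antidiagonal, two_mul])]
  rintro ⟨a, b⟩ hab hne
  simp only [Finset.HasAntidiagonal.mem_antidiagonal] at hab
  have hne' : ¬(a = d ∧ b = d) := by simpa [Prod.ext_iff] using hne
  rcases lt_or_ge d a with h | h
  · exact mul_eq_zero_of_left (Polynomial.coeff_eq_zero_of_natDegree_lt (lt_of_le_of_lt hu h)) _
  · have : d < b := by omega
    exact mul_eq_zero_of_right _ (Polynomial.coeff_eq_zero_of_natDegree_lt (lt_of_le_of_lt hu this))

lemma aux_coeff_aeval_scale {m : ℕ} (y : Fin m → ℝ) (p : MvPolynomial (Fin m) ℝ) (e : ℕ) :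
    (MvPolynomial.aeval (fun i => Polynomial.C (y i) * Polynomial.X) p).coeff e
      = eval y (homogeneousComponent e p) := by
  induction p using MvPolynomial.induction_on' with
  | monomial s a =>
    rw [aeval_monomial]
    have hprod : (Finsupp.prod s fun i k => (Polynomial.C (y i) * Polynomial.X) ^ k)
        = Polynomial.C (Finsupp.prod s fun i k => (y i) ^ k)
          * Polynomial.X ^ (s.degree) := by
      rw [Finsupp.prod, Finsupp.prod, Finsupp.degree_apply]
      simp [mul_pow, Finset.prod_mul_distrib, Finset.prod_pow_eq_pow_sum, map_prod]
    have hm : homogeneousComponent e (monomial s a) = if s.degree = e then monomial s a else 0 := by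
      ext t
      rw [coeff_homogeneousComponent]
      by_cases h1 : t.degree = e <;> by_cases h2 : s.degree = e <;>
        by_cases h3 : s = t <;>
        simp_all [coeff_monomial]
    rw [hprod, hm]
    have : (algebraMap ℝ (Polynomial ℝ)) a = Polynomial.C a := rfl
    rw [this, ← mul_assoc, ← Polynomial.C_mul, Polynomial.coeff_C_mul, Polynomial.coeff_X_pow]
    by_cases h : s.degree = e
    · simp [h, eval_monomial, mul_comm]
    · rw [if_neg (fun he => h he.symm), if_neg h]
      simp
  | add p q hp hq =>
    simp [map_add, hp, hq]

lemma aux_deg_le_one {m N : ℕ} {A : Matrix (Fin m) (Fin m) ℝ} {p : Fin N → MvPolynomial (Fin m) ℝ}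
    (h : (∑ i, ∑ j, (X i : MvPolynomial (Fin m) ℝ) * X j * C (A i j)) = ∑ k, (p k)^2) :
    ∀ k, (p k).totalDegree ≤ 1 := by
  by_contra hc
  push_neg at hc
  obtain ⟨k₀, hk₀⟩ := hc
  set d := Finset.univ.sup (fun k => (p k).totalDegree) with hd
  have hd2 : 2 ≤ d := le_trans hk₀ (Finset.le_sup (f := fun k => (p k).totalDegree) (Finset.mem_univ k₀))
  obtain ⟨k₁, -, hk₁⟩ := Finset.exists_mem_eq_sup Finset.univ
    ⟨k₀, Finset.mem_univ k₀⟩ (fun k => (p k).totalDegree)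
  have hdk : (p k₁).totalDegree = d := by rw [hd, hk₁]
  have hp1 : p k₁ ≠ 0 := by
    intro h0
    rw [h0, MvPolynomial.totalDegree_zero] at hdk
    omega
  have hne : homogeneousComponent d (p k₁) ≠ 0 := by
    obtain ⟨s, hs, hsd⟩ := Finset.exists_mem_eq_sup (p k₁).support
      (MvPolynomial.support_nonempty.mpr hp1) (fun s => s.sum fun _ e => e)
    have hdeg : s.degree = d := by
      rw [← hdk, MvPolynomial.totalDegree, hsd]
      rfl
    intro h0
    have := coeff_homogeneousComponent (σ := Fin m) (R := ℝ) d (p k₁) s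
    rw [h0, if_pos hdeg] at this
    exact (MvPolynomial.mem_support_iff.mp hs) this.symm
  obtain ⟨y, hy⟩ := aux_exists_eval_ne hne
  set Φ : MvPolynomial (Fin m) ℝ →ₐ[ℝ] Polynomial ℝ :=
    MvPolynomial.aeval (fun i => Polynomial.C (y i) * Polynomial.X) with hΦ
  have hdegΦ : ∀ k, (Φ (p k)).natDegree ≤ d := by
    intro k
    rw [Polynomial.natDegree_le_iff_coeff_eq_zero]
    intro e he
    rw [hΦ, aux_coeff_aeval_scale]
    have hlt : (p k).totalDegree < e :=
      lt_of_le_of_lt (le_trans (Finset.le_sup (f := fun k => (p k).totalDegree)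
        (Finset.mem_univ k)) (le_refl d)) he
    rw [homogeneousComponent_eq_zero _ _ hlt]
    simp
  have hL : ∀ i j : Fin m,
      (Φ ((X i : MvPolynomial (Fin m) ℝ) * X j * C (A i j))).coeff (2*d) = 0 := by
    intro i j
    have hrw : Φ ((X i : MvPolynomial (Fin m) ℝ) * X j * C (A i j))
        = Polynomial.C (y i * y j * A i j) * Polynomial.X ^ 2 := by
      rw [hΦ]
      simp [Polynomial.algebraMap_eq]
      ring
    rw [hrw, Polynomial.coeff_C_mul, Polynomial.coeff_X_pow, if_neg (by omega)]
    simp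
  have hR : ∀ k : Fin N, ((Φ (p k))^2).coeff (2*d) = (eval y (homogeneousComponent d (p k)))^2 := by
    intro k
    rw [aux_coeff_sq (hdegΦ k), hΦ, aux_coeff_aeval_scale]
  have happ := congrArg (fun q => (Φ q).coeff (2*d)) h
  simp only [map_sum, map_pow, Polynomial.finset_sum_coeff] at happ
  rw [Finset.sum_congr rfl (fun i _ => Finset.sum_congr rfl (fun j _ => hL i j)),
    Finset.sum_congr rfl (fun k _ => hR k)] at happ
  simp only [Finset.sum_const_zero] at happ
  have := aux_real_sos happ.symm k₁
  rw [this] at hy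
  simp at hy

lemma aux_single_of_degree_one {m : ℕ} {s : Fin m →₀ ℕ} (h : s.degree = 1) :
    ∃ i, s = Finsupp.single i 1 := by
  have hs0 : s ≠ 0 := by
    intro h0
    rw [h0] at h
    simp at h
  obtain ⟨i, hi⟩ := Finsupp.support_nonempty_iff.mpr hs0
  refine ⟨i, Finsupp.eq_single_iff.mpr ⟨?_, ?_⟩⟩
  · intro j hj
    simp only [Finset.mem_singleton]
    by_contra hji
    have h2 : 2 ≤ s.degree := by
      rw [Finsupp.degree_apply, ← Finset.add_sum_erase _ _ hi]
      have hj' : j ∈ s.support.erase i := Finset.mem_erase.mpr ⟨hji, hj⟩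
      have hsj : s j ≤ ∑ x ∈ s.support.erase i, s x :=
        Finset.single_le_sum (fun a _ => Nat.zero_le (s a)) hj'
      have h1i : 1 ≤ s i := Nat.one_le_iff_ne_zero.mpr (Finsupp.mem_support_iff.mp hi)
      have h1j : 1 ≤ s j := Nat.one_le_iff_ne_zero.mpr (Finsupp.mem_support_iff.mp hj)
      omega
    omega
  · have hle : s i ≤ s.degree := by
      rw [Finsupp.degree_apply]
      exact Finset.single_le_sum (f := fun a => s a) (fun a _ => Nat.zero_le _) hi
    have h1i : 1 ≤ s i := Nat.one_le_iff_ne_zero.mpr (Finsupp.mem_support_iff.mp hi)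
    omega

lemma aux_eq_linear {m : ℕ} {p : MvPolynomial (Fin m) ℝ} (h1 : p.totalDegree ≤ 1)
    (h0 : coeff 0 p = 0) :
    p = ∑ i, (C (coeff (Finsupp.single i 1) p) * X i) := by
  ext s
  rw [MvPolynomial.coeff_sum]
  simp_rw [coeff_C_mul, MvPolynomial.coeff_X']
  rcases Nat.lt_or_ge s.degree 1 with hs | hs
  · have hs0 : s = 0 := by
      have : s.degree = 0 := by omega
      exact (Finsupp.degree_eq_zero_iff s).mp this
    subst hs0
    rw [h0]
    rw [Finset.sum_eq_zero]
    intro i _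
    rw [if_neg (by simp [Finsupp.single_eq_zero])]
    simp
  rcases Nat.lt_or_ge s.degree 2 with hs2 | hs2
  · have hdeg : s.degree = 1 := by omega
    obtain ⟨i₀, rfl⟩ := aux_single_of_degree_one hdeg
    rw [Finset.sum_eq_single i₀]
    · simp
    · intro j _ hj
      rw [if_neg]
      · simp
      · intro hcon
        rcases (Finsupp.single_eq_single_iff _ _ _ _).mp hcon with ⟨h, -⟩ | ⟨h, -⟩
        · exact hj h
        · omega
    · intro hcon
      exact absurd (Finset.mem_univ i₀) hcon
  · rw [MvPolynomial.coeff_eq_zero_of_totalDegree_lt]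
    · rw [Finset.sum_eq_zero]
      intro i _
      rw [if_neg]
      · simp
      · intro hcon
        rw [← hcon] at hs2
        have : (Finsupp.single i 1).degree = 1 := by
          rw [Finsupp.degree_apply, Finsupp.support_single_ne_zero _ (one_ne_zero)]
          simp
        omega
    · have : (∑ i ∈ s.support, s i) = s.degree := rfl
      omega

lemma aux_core {m N : ℕ} {A : Matrix (Fin m) (Fin m) ℝ} {p : Fin N → MvPolynomial (Fin m) ℝ}
    (hA : ∀ i j, A i j = A j i)
    (h : (∑ i, ∑ j, (X i : MvPolynomial (Fin m) ℝ) * X j * C (A i j)) = ∑ k, (p k)^2) :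
    ∀ i j, A i j = ∑ k, coeff (Finsupp.single i 1) (p k) * coeff (Finsupp.single j 1) (p k) := by
  have hdeg := aux_deg_le_one h
  set M : Fin N → Fin m → ℝ := fun k i => coeff (Finsupp.single i 1) (p k) with hM
  have hconst : ∀ k, coeff 0 (p k) = 0 := by
    have h0 := congrArg (eval (fun _ => (0:ℝ))) h
    simp only [eval_sum, map_pow, _root_.map_mul, eval_X, eval_C, mul_zero, zero_mul,
      Finset.sum_const_zero] at h0
    intro k
    have := aux_real_sos h0.symm k
    rwa [MvPolynomial.eval_zero'] at this
  have hlin : ∀ k, p k = ∑ i, (C (M k i) * X i) := fun k => aux_eq_linear (hdeg k) (hconst k)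
  have heval : ∀ y : Fin m → ℝ,
      (∑ i, ∑ j, A i j * y i * y j) = ∑ k, (∑ i, M k i * y i)^2 := by
    intro y
    have := congrArg (eval y) h
    simp only [eval_sum, map_pow, _root_.map_mul, eval_X, eval_C] at this
    calc (∑ i, ∑ j, A i j * y i * y j)
        = ∑ i, ∑ j, y i * y j * A i j := by
          refine Finset.sum_congr rfl fun i _ => Finset.sum_congr rfl fun j _ => by ring
      _ = ∑ k, (eval y (p k))^2 := this
      _ = ∑ k, (∑ i, M k i * y i)^2 := by
          refine Finset.sum_congr rfl fun k _ => ?_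
          rw [hlin k]
          simp [eval_sum]
  have hdiag : ∀ i, A i i = ∑ k, (M k i)^2 := by
    intro i
    have := heval (fun l => if l = i then 1 else 0)
    simpa [Finset.sum_ite_eq', mul_ite, ite_mul, sq] using this
  intro i j
  have h2 := heval (fun l => (if l = i then 1 else 0) + (if l = j then 1 else 0))
  have hLHS : (∑ a, ∑ b, A a b * ((if a = i then (1:ℝ) else 0) + (if a = j then 1 else 0))
      * ((if b = i then (1:ℝ) else 0) + (if b = j then 1 else 0)))
      = A i i + A i j + A j i + A j j := by
    simp [mul_add, add_mul, Finset.sum_add_distrib, Finset.sum_ite_eq', mul_ite, ite_mul]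
    ring
  have hRHS : (∑ k, (∑ a, M k a * ((if a = i then (1:ℝ) else 0) + (if a = j then 1 else 0)))^2)
      = ∑ k, (M k i + M k j)^2 := by
    refine Finset.sum_congr rfl fun k _ => ?_
    congr 1
    simp [mul_add, Finset.sum_add_distrib, Finset.sum_ite_eq', mul_ite]
  rw [hLHS, hRHS] at h2
  have hexp : ∑ k, (M k i + M k j)^2
      = (∑ k, (M k i)^2) + 2 * (∑ k, M k i * M k j) + (∑ k, (M k j)^2) := by
    rw [Finset.mul_sum, ← Finset.sum_add_distrib, ← Finset.sum_add_distrib]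
    refine Finset.sum_congr rfl fun k _ => by ring
  rw [hexp, ← hdiag i, ← hdiag j, hA j i] at h2
  linarith

noncomputable def auxV (n m : ℕ) : Fin (n + m) → MvPolynomial (Fin m) (MvPolynomial (Fin n) ℝ) :=
  Fin.addCases (fun j => C (X j)) (fun i => X i)

lemma auxV_natAdd (n m : ℕ) (i : Fin m) : auxV n m (Fin.natAdd n i) = X i := by
  simp [auxV]

lemma auxV_rename (n m : ℕ) (q : MvPolynomial (Fin n) ℝ) :
    aeval (auxV n m) (rename (Fin.castAdd m) q) = C q := by
  rw [aeval_rename]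
  have hcomp : (auxV n m) ∘ (Fin.castAdd m) = fun j => (C (X j) :
      MvPolynomial (Fin m) (MvPolynomial (Fin n) ℝ)) := by
    funext j
    simp [auxV]
  rw [hcomp]
  induction q using MvPolynomial.induction_on with
  | C a => simp [algebraMap_eq]
  | add p q hp hq => simp [hp, hq]
  | mul_X p i hp => simp [hp]

/-- For a symmetric m×m matrix Q of real polynomials in n variables, the polynomial
yᵀ Q(x) y in n + m variables is a sum of squares iff Q = Mᵀ M for some N×m matrix M of
polynomials in x. -/
theorem stmt_18 (n m : ℕ) (hn : 1 ≤ n) (hm : 1 ≤ m)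
    (Q : Matrix (Fin m) (Fin m) (MvPolynomial (Fin n) ℝ)) (hQ : Q.IsSymm) :
    (∃ (N : ℕ) (r : Fin N → MvPolynomial (Fin (n + m)) ℝ),
      (∑ i : Fin m, ∑ j : Fin m,
        MvPolynomial.X (Fin.natAdd n i) * MvPolynomial.X (Fin.natAdd n j) *
          MvPolynomial.rename (Fin.castAdd m) (Q i j)) = ∑ k, (r k) ^ 2) ↔
    (∃ (N : ℕ) (M : Matrix (Fin N) (Fin m) (MvPolynomial (Fin n) ℝ)),
      Q = Mᵀ * M) := by
  constructor
  · rintro ⟨N, r, hr⟩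
    set φ : MvPolynomial (Fin (n+m)) ℝ →ₐ[ℝ] MvPolynomial (Fin m) (MvPolynomial (Fin n) ℝ) :=
      aeval (auxV n m) with hφ
    have happ := congrArg φ hr
    simp only [map_sum, _root_.map_mul, map_pow, hφ, aeval_X, auxV_natAdd, auxV_rename] at happ
    set g : Fin N → MvPolynomial (Fin m) (MvPolynomial (Fin n) ℝ) :=
      fun k => aeval (auxV n m) (r k) with hg
    have happ2 : (∑ i : Fin m, ∑ j : Fin m, (X i) * X j * C (Q i j)) = ∑ k, (g k)^2 := happ
    refine ⟨N, Matrix.of fun k i => coeff (Finsupp.single i 1) (g k), ?_⟩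
    refine Matrix.ext fun i j => ?_
    rw [Matrix.mul_apply]
    simp only [Matrix.transpose_apply, Matrix.of_apply]
    apply MvPolynomial.funext
    intro x
    have hx := congrArg (MvPolynomial.map (eval x : MvPolynomial (Fin n) ℝ →+* ℝ)) happ2
    simp only [map_sum, _root_.map_mul, map_pow, MvPolynomial.map_C, MvPolynomial.map_X] at hx
    have hA : ∀ a b : Fin m, eval x (Q a b) = eval x (Q b a) := by
      intro a b
      rw [hQ.apply a b]
    have := aux_core (A := fun a b => eval x (Q a b))
      (p := fun k => MvPolynomial.map (eval x : MvPolynomial (Fin n) ℝ →+* ℝ) (g k))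
      (fun a b => by exact hA a b) (by simpa using hx) i j
    simp only [MvPolynomial.coeff_map] at this
    rw [this]
    simp [eval_sum]
  · rintro ⟨N, M, rfl⟩
    refine ⟨N, fun k => ∑ i, X (Fin.natAdd n i) * rename (Fin.castAdd m) (M k i), ?_⟩
    have hsq : ∀ k : Fin N,
        (∑ i, (X (Fin.natAdd n i) : MvPolynomial (Fin (n+m)) ℝ)
          * rename (Fin.castAdd m) (M k i))^2
        = ∑ i, ∑ j, X (Fin.natAdd n i) * X (Fin.natAdd n j)
            * (rename (Fin.castAdd m) (M k i) * rename (Fin.castAdd m) (M k j)) := by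
      intro k
      rw [sq, Finset.sum_mul_sum]
      exact Finset.sum_congr rfl fun i _ => Finset.sum_congr rfl fun j _ => by ring
    set T : Fin m → Fin m → Fin N → MvPolynomial (Fin (n+m)) ℝ :=
      fun i j k => X (Fin.natAdd n i) * X (Fin.natAdd n j)
        * ((rename (Fin.castAdd m)) (M k i) * (rename (Fin.castAdd m)) (M k j)) with hT
    have h1 : ∀ i j : Fin m,
        (X (Fin.natAdd n i) : MvPolynomial (Fin (n+m)) ℝ) * X (Fin.natAdd n j)
          * rename (Fin.castAdd m) ((Mᵀ * M) i j) = ∑ k, T i j k := by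
      intro i j
      rw [Matrix.mul_apply, hT]
      simp only [Matrix.transpose_apply, map_sum, _root_.map_mul, Finset.mul_sum]
    calc (∑ i : Fin m, ∑ j : Fin m, X (Fin.natAdd n i) * X (Fin.natAdd n j)
          * rename (Fin.castAdd m) ((Mᵀ * M) i j))
        = ∑ i : Fin m, ∑ j : Fin m, ∑ k : Fin N, T i j k :=
          Finset.sum_congr rfl fun i _ => Finset.sum_congr rfl fun j _ => h1 i j
      _ = ∑ k : Fin N, ∑ i : Fin m, ∑ j : Fin m, T i j k :=
          (Finset.sum_congr rfl fun i _ => Finset.sum_comm).trans Finset.sum_comm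
      _ = ∑ k : Fin N, (∑ i, (X (Fin.natAdd n i) : MvPolynomial (Fin (n+m)) ℝ)
            * rename (Fin.castAdd m) (M k i))^2 :=
          Finset.sum_congr rfl fun k _ => (hsq k).symm
end

section
/- Let q = (q₁, q₂, q₃) be the triple of univariate real polynomials q₁ = 1 + x², q₂ = 1 − x², q₃ = 2x. Then: (a) for every x ∈ ℝ, q₁(x) ≥ √(q₂(x)² + q₃(x)²) (indeed q₁(x)² = q₂(x)² + q₃(x)² and q₁(x) > 0); (b) there exist N ∈ ℕ and an N×3 matrix M of real univariate polynomials with arrow(q) = Mᵀ M, where arrow(q) is the symmetric 3×3 polynomial matrix [[q₁, q₂, q₃], [q₂, q₁, 0], [q₃, 0, q₁]]; but (c) there is no N ∈ ℕ and no family of triples p_k = (p_{k,1}, p_{k,2}, p_{k,3}) of real univariate polynomials each of degree at most 1 such that q = Σ_{k=1}^{N} p_k ∘ p_k, where (p ∘ p)₁ = p₁² + p₂² + p₃², (p ∘ p)₂ = 2 p₁ p₂, (p ∘ p)₃ = 2 p₁ p₃. -/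
open Polynomial Matrix

/-- The product ∘ on triples of univariate real polynomials. -/
noncomputable def circ3 (p q : Fin 3 → Polynomial ℝ) : Fin 3 → Polynomial ℝ :=
  fun i => if i = 0 then ∑ j, p j * q j else p 0 * q i + q 0 * p i

lemma coeff_mul_01 (a b e f : ℝ) : ((C b * X + C a) * (C f * X + C e)).coeff 0 = a * e := by
  simp [mul_add, add_mul, mul_assoc, coeff_C]

lemma coeff_mul_11 (a b e f : ℝ) : ((C b * X + C a) * (C f * X + C e)).coeff 1 = b * e + a * f := by
  have h : (C b * X + C a) * (C f * X + C e)
      = C (b*f) * X^2 + C (b*e + a*f) * X + C (a*e) := by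
    simp only [C_mul, C_add]; ring
  rw [h]; simp [mul_assoc, coeff_C_mul, coeff_X_pow, coeff_C]

lemma coeff_mul_21 (a b e f : ℝ) : ((C b * X + C a) * (C f * X + C e)).coeff 2 = b * f := by
  have h : (C b * X + C a) * (C f * X + C e)
      = C (b*f) * X^2 + C (b*e + a*f) * X + C (a*e) := by
    simp only [C_mul, C_add]; ring
  rw [h]; simp [mul_assoc, coeff_C_mul, coeff_X_pow, coeff_C]

/-- For q = (1 + x², 1 − x², 2x): (a) q is pointwise in the second-order cone (indeed
q₁(x)² = q₂(x)² + q₃(x)² and q₁(x) > 0); (b) arrow(q) = Mᵀ M for some polynomial matrix M;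
but (c) q is not a sum of terms pₖ ∘ pₖ with each pₖ a triple of polynomials of degree
at most 1. -/
theorem stmt_19 :
    let q : Fin 3 → Polynomial ℝ :=
      ![1 + Polynomial.X ^ 2, 1 - Polynomial.X ^ 2, 2 * Polynomial.X]
    (∀ x : ℝ,
      Real.sqrt ((Polynomial.eval x (q 1)) ^ 2 + (Polynomial.eval x (q 2)) ^ 2) ≤
        Polynomial.eval x (q 0)) ∧
    (∀ x : ℝ,
      (Polynomial.eval x (q 0)) ^ 2 =
        (Polynomial.eval x (q 1)) ^ 2 + (Polynomial.eval x (q 2)) ^ 2 ∧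
      0 < Polynomial.eval x (q 0)) ∧
    (∃ (N : ℕ) (M : Matrix (Fin N) (Fin 3) (Polynomial ℝ)),
      !![q 0, q 1, q 2; q 1, q 0, 0; q 2, 0, q 0] = Mᵀ * M) ∧
    ¬ ∃ (N : ℕ) (p : Fin N → Fin 3 → Polynomial ℝ),
      (∀ k i, (p k i).degree ≤ 1) ∧ q = ∑ k, circ3 (p k) (p k) := by
  intro q
  refine ⟨?_, ?_, ?_, ?_⟩
  · intro x
    simp only [q, Matrix.cons_val_zero, Matrix.cons_val_one, Matrix.head_cons,
      Matrix.cons_val_two, Matrix.tail_cons, eval_add, eval_sub, eval_one, eval_pow,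
      eval_mul, eval_X, eval_ofNat]
    have h : (1 - x^2)^2 + (2*x)^2 = (1 + x^2)^2 := by ring
    rw [h, Real.sqrt_sq (by positivity)]
  · intro x
    simp only [q, Matrix.cons_val_zero, Matrix.cons_val_one, Matrix.head_cons,
      Matrix.cons_val_two, Matrix.tail_cons, eval_add, eval_sub, eval_one, eval_pow,
      eval_mul, eval_X, eval_ofNat]
    constructor
    · ring
    · positivity
  · refine ⟨2, !![1, 1, X; X, -X, 1], ?_⟩
    refine Matrix.ext fun i j => ?_
    fin_cases i <;> fin_cases j <;>
      simp [q, Matrix.mul_apply, Fin.sum_univ_succ, Matrix.transpose] <;> ring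
  · rintro ⟨N, p, hdeg, hq⟩
    have hrep : ∀ k i, p k i = C ((p k i).coeff 1) * X + C ((p k i).coeff 0) :=
      fun k i => eq_X_add_C_of_degree_le_one (hdeg k i)
    have h0 : (1 + X^2 : ℝ[X]) = ∑ k, (p k 0 * p k 0 + p k 1 * p k 1 + p k 2 * p k 2) := by
      have := congrFun hq 0
      simpa [q, circ3, Finset.sum_apply, Fin.sum_univ_three, add_assoc] using this
    have h1 : (1 - X^2 : ℝ[X]) = ∑ k, (p k 0 * p k 1 + p k 0 * p k 1) := by
      have := congrFun hq 1
      simpa [q, circ3, Finset.sum_apply] using this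
    have h2 : (2 * X : ℝ[X]) = ∑ k, (p k 0 * p k 2 + p k 0 * p k 2) := by
      have := congrFun hq 2
      simpa [q, circ3, Finset.sum_apply] using this
    have S1 : ∑ k : Fin N, ((p k 0).coeff 0^2 + (p k 1).coeff 0^2 + (p k 2).coeff 0^2) = 1 := by
      calc ∑ k : Fin N, ((p k 0).coeff 0^2 + (p k 1).coeff 0^2 + (p k 2).coeff 0^2)
          = ∑ k : Fin N, (p k 0 * p k 0 + p k 1 * p k 1 + p k 2 * p k 2).coeff 0 :=
            Finset.sum_congr rfl fun k _ => by
              conv_rhs => rw [hrep k 0, hrep k 1, hrep k 2]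
              rw [coeff_add, coeff_add, coeff_mul_01, coeff_mul_01, coeff_mul_01]; ring
        _ = (∑ k : Fin N, (p k 0 * p k 0 + p k 1 * p k 1 + p k 2 * p k 2)).coeff 0 :=
            (finset_sum_coeff _ _ _).symm
        _ = (1 + X^2 : ℝ[X]).coeff 0 := by rw [← h0]
        _ = 1 := by simp
    have S2 : ∑ k : Fin N, ((p k 0).coeff 1^2 + (p k 1).coeff 1^2 + (p k 2).coeff 1^2) = 1 := by
      calc ∑ k : Fin N, ((p k 0).coeff 1^2 + (p k 1).coeff 1^2 + (p k 2).coeff 1^2)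
          = ∑ k : Fin N, (p k 0 * p k 0 + p k 1 * p k 1 + p k 2 * p k 2).coeff 2 :=
            Finset.sum_congr rfl fun k _ => by
              conv_rhs => rw [hrep k 0, hrep k 1, hrep k 2]
              rw [coeff_add, coeff_add, coeff_mul_21, coeff_mul_21, coeff_mul_21]; ring
        _ = (∑ k : Fin N, (p k 0 * p k 0 + p k 1 * p k 1 + p k 2 * p k 2)).coeff 2 :=
            (finset_sum_coeff _ _ _).symm
        _ = (1 + X^2 : ℝ[X]).coeff 2 := by rw [← h0]
        _ = 1 := by simp [coeff_X_pow, coeff_one]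
    have S3 : ∑ k : Fin N, (2 * ((p k 0).coeff 0 * (p k 1).coeff 0)) = 1 := by
      calc ∑ k : Fin N, (2 * ((p k 0).coeff 0 * (p k 1).coeff 0))
          = ∑ k : Fin N, (p k 0 * p k 1 + p k 0 * p k 1).coeff 0 :=
            Finset.sum_congr rfl fun k _ => by
              conv_rhs => rw [hrep k 0, hrep k 1]
              rw [coeff_add, coeff_mul_01]; ring
        _ = (∑ k : Fin N, (p k 0 * p k 1 + p k 0 * p k 1)).coeff 0 :=
            (finset_sum_coeff _ _ _).symm
        _ = (1 - X^2 : ℝ[X]).coeff 0 := by rw [← h1]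
        _ = 1 := by simp
    have S4 : ∑ k : Fin N, (2 * ((p k 0).coeff 1 * (p k 1).coeff 1)) = -1 := by
      calc ∑ k : Fin N, (2 * ((p k 0).coeff 1 * (p k 1).coeff 1))
          = ∑ k : Fin N, (p k 0 * p k 1 + p k 0 * p k 1).coeff 2 :=
            Finset.sum_congr rfl fun k _ => by
              conv_rhs => rw [hrep k 0, hrep k 1]
              rw [coeff_add, coeff_mul_21]; ring
        _ = (∑ k : Fin N, (p k 0 * p k 1 + p k 0 * p k 1)).coeff 2 :=
            (finset_sum_coeff _ _ _).symm
        _ = (1 - X^2 : ℝ[X]).coeff 2 := by rw [← h1]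
        _ = -1 := by simp [coeff_X_pow, coeff_one]
    have S5 : ∑ k : Fin N,
        (2 * ((p k 0).coeff 1 * (p k 2).coeff 0 + (p k 0).coeff 0 * (p k 2).coeff 1)) = 2 := by
      calc ∑ k : Fin N, (2 * ((p k 0).coeff 1 * (p k 2).coeff 0 + (p k 0).coeff 0 * (p k 2).coeff 1))
          = ∑ k : Fin N, (p k 0 * p k 2 + p k 0 * p k 2).coeff 1 :=
            Finset.sum_congr rfl fun k _ => by
              conv_rhs => rw [hrep k 0, hrep k 2]
              rw [coeff_add, coeff_mul_11]; ring
        _ = (∑ k : Fin N, (p k 0 * p k 2 + p k 0 * p k 2)).coeff 1 :=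
            (finset_sum_coeff _ _ _).symm
        _ = (2 * X : ℝ[X]).coeff 1 := by rw [← h2]
        _ = 2 := by simp
    have hE : ∀ k : Fin N, (p k 2).coeff 0 = 0 := by
      have hz : ∑ k : Fin N, (((p k 0).coeff 0 - (p k 1).coeff 0)^2 + (p k 2).coeff 0^2) = 0 := by
        have : ∑ k : Fin N, (((p k 0).coeff 0 - (p k 1).coeff 0)^2 + (p k 2).coeff 0^2)
            = (∑ k : Fin N, ((p k 0).coeff 0^2 + (p k 1).coeff 0^2 + (p k 2).coeff 0^2))
              - ∑ k : Fin N, (2 * ((p k 0).coeff 0 * (p k 1).coeff 0)) := by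
          rw [← Finset.sum_sub_distrib]
          exact Finset.sum_congr rfl fun k _ => by ring
        rw [this, S1, S3]; norm_num
      intro k
      have h := (Finset.sum_eq_zero_iff_of_nonneg (fun k _ => by positivity)).mp hz k
        (Finset.mem_univ k)
      nlinarith [sq_nonneg ((p k 0).coeff 0 - (p k 1).coeff 0), sq_nonneg ((p k 2).coeff 0)]
    have hF : ∀ k : Fin N, (p k 2).coeff 1 = 0 := by
      have hz : ∑ k : Fin N, (((p k 0).coeff 1 + (p k 1).coeff 1)^2 + (p k 2).coeff 1^2) = 0 := by
        have : ∑ k : Fin N, (((p k 0).coeff 1 + (p k 1).coeff 1)^2 + (p k 2).coeff 1^2)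
            = (∑ k : Fin N, ((p k 0).coeff 1^2 + (p k 1).coeff 1^2 + (p k 2).coeff 1^2))
              + ∑ k : Fin N, (2 * ((p k 0).coeff 1 * (p k 1).coeff 1)) := by
          rw [← Finset.sum_add_distrib]
          exact Finset.sum_congr rfl fun k _ => by ring
        rw [this, S2, S4]; norm_num
      intro k
      have h := (Finset.sum_eq_zero_iff_of_nonneg (fun k _ => by positivity)).mp hz k
        (Finset.mem_univ k)
      nlinarith [sq_nonneg ((p k 0).coeff 1 + (p k 1).coeff 1), sq_nonneg ((p k 2).coeff 1)]
    rw [Finset.sum_eq_zero (fun k _ => by rw [hE k, hF k]; ring)] at S5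
    norm_num at S5
end
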